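/- arXiv:2506.07757 — 4 statements merged into one kernel-verified Lean document; each statement's English description precedes it below -/
import Mathlib

section
/- Let M be a nilpotent simple matroid of rank at most 3 on [d], and let w = (p_1,…,p_d) be an ordering of [d] such that w_i ≤ 1 for every i, where w_i is the degree of p_i in the restriction M|{p_1,…,p_i}. Let γ = (γ_1,…,γ_d) ∈ V_{C(M)} be such that γ_i ≠ 0 for all i and γ_i, γ_j are linearly independent for all i ≠ j (no loops and no coinciding points), and let q ∈ ℂ³ satisfy q ∉ span{γ_i, γ_j} for all i, j ∈ [d] (q is in general position with respect to γ). Then the set Lift_{M,q}(γ) = { z = (z_1,…,z_d) ∈ ℂ^d : (γ_1 + z_1 q, …, γ_d + z_d q) ∈ V_{C(M)} } is the underlying set of a ℂ-linear subspace of ℂ^d of dimension d − Σ_{i=1}^d w_i. -/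
/-- A point-line "pre-matroid": a ground set together with an independence predicate.
The matroid axioms are stated separately as `PLM.IsMatroid`. -/
structure PLM (α : Type) where
  E : Set α
  Indep : Set α → Prop

namespace PLM

variable {α : Type}

/-- The matroid axioms: finite ground set, the empty set is independent, independent sets
are contained in the ground set, hereditary property, and the exchange property. -/
def IsMatroid (M : PLM α) : Prop :=
  M.E.Finite ∧ M.Indep ∅ ∧ (∀ I, M.Indep I → I ⊆ M.E) ∧
    (∀ I J, M.Indep J → I ⊆ J → M.Indep I) ∧
    (∀ I J, M.Indep I → M.Indep J → I.ncard < J.ncard → ∃ e ∈ J \ I, M.Indep (insert e I))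

/-- A matroid is simple if every subset of the ground set of size at most 2 is independent. -/
def Simple (M : PLM α) : Prop := ∀ S ⊆ M.E, S.ncard ≤ 2 → M.Indep S

/-- Rank at most three: every independent set has at most 3 elements. -/
def RankLE3 (M : PLM α) : Prop := ∀ I, M.Indep I → I.ncard ≤ 3

/-- Rank exactly three. -/
def RankEq3 (M : PLM α) : Prop := M.RankLE3 ∧ ∃ I, M.Indep I ∧ I.ncard = 3

/-- The property of being a dependent subset of the ground set all of whose
3-element subsets are dependent. -/
def LinePre (M : PLM α) (l : Set α) : Prop :=
  l ⊆ M.E ∧ ¬ M.Indep l ∧ ∀ t ⊆ l, t.ncard = 3 → ¬ M.Indep t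

/-- A line: a maximal dependent subset of the ground set in which every
3-element subset is dependent. -/
def IsLine (M : PLM α) (l : Set α) : Prop :=
  M.LinePre l ∧ ∀ l', M.LinePre l' → l ⊆ l' → l' = l

/-- The degree of a point: the number of lines containing it. -/
noncomputable def degree (M : PLM α) (p : α) : ℕ :=
  {l : Set α | M.IsLine l ∧ p ∈ l}.ncard

/-- Restriction of `M` to a subset `X` of the ground set. -/
def restrict (M : PLM α) (X : Set α) : PLM α :=
  ⟨M.E ∩ X, fun I => M.Indep I ∧ I ⊆ X⟩

/-- The matroid `M(J)` obtained from `M` by turning every point of `J` into a loop: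
a set is independent iff it is an independent set of `M` contained in `E \ J`. -/
def loopify (M : PLM α) (J : Set α) : PLM α :=
  ⟨M.E, fun I => M.Indep I ∧ I ⊆ M.E \ J⟩

/-- One step of the nilpotency chain: restrict to the set `S_M` of points of degree at least 2. -/
noncomputable def Sstep (M : PLM α) : PLM α :=
  M.restrict {p ∈ M.E | 2 ≤ M.degree p}

/-- `M` is nilpotent if iterating `Sstep` eventually reaches the empty ground set. -/
def Nilpotent (M : PLM α) : Prop := ∃ n : ℕ, (PLM.Sstep^[n] M).E = (∅ : Set α)

/-- `Q_M`: the set of points of degree at least 3. -/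
def Qset (M : PLM α) : Set α := {p ∈ M.E | 3 ≤ M.degree p}

/-- A circuit: a minimal dependent subset of the ground set. -/
def Circuit (M : PLM α) (C : Set α) : Prop :=
  C ⊆ M.E ∧ ¬ M.Indep C ∧ ∀ C', C' ⊂ C → M.Indep C'

end PLM

/-! Realization spaces for matroids on `Fin d`, with configurations in `ℂ^{3d}`. -/

/-- A point of `ℂ^{3d}`, viewed as `d` vectors in `ℂ³`. -/
abbrev Config (d : ℕ) := Fin d × Fin 3 → ℂ

/-- The `i`-th vector of a configuration. -/
def cvec {d : ℕ} (γ : Config d) (i : Fin d) : Fin 3 → ℂ := fun j => γ (i, j)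

/-- The family of vectors indexed by `S` is linearly dependent. -/
def LinDep {d : ℕ} (γ : Config d) (S : Set (Fin d)) : Prop :=
  ¬ LinearIndependent ℂ (fun i : S => cvec γ i)

/-- The realization space `Γ_M ⊆ ℂ^{3d}`: tuples such that a subset of the ground set is
dependent iff the corresponding vectors are linearly dependent. -/
def realizationSpace {d : ℕ} (M : PLM (Fin d)) : Set (Config d) :=
  {γ | ∀ S ⊆ M.E, (¬ M.Indep S ↔ LinDep γ S)}

/-- The circuit variety `V_{C(M)}`: tuples whose vectors satisfy all dependencies of `M`. -/
def circuitVariety {d : ℕ} (M : PLM (Fin d)) : Set (Config d) :=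
  {γ | ∀ S ⊆ M.E, ¬ M.Indep S → LinDep γ S}

/-- The matroid variety `V_M`: the Zariski closure of the realization space, i.e. the zero
locus of the vanishing ideal of `Γ_M` in the polynomial ring in `3d` variables. -/
noncomputable def matroidVariety {d : ℕ} (M : PLM (Fin d)) : Set (Config d) :=
  MvPolynomial.zeroLocus ℂ (MvPolynomial.vanishingIdeal ℂ (realizationSpace M))



open Module Submodule

namespace LiftAux

/-- subtype family over {i,j,k} is linearly independent iff the vector triple is -/
lemma lindep_triple_iff {α : Type} [DecidableEq α] {V : Type} [AddCommGroup V] [Module ℂ V]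
    (v : α → V) {i j k : α} (hij : i ≠ j) (hik : i ≠ k) (hjk : j ≠ k) :
    LinearIndependent ℂ (fun x : ({i, j, k} : Set α) => v x) ↔
      LinearIndependent ℂ ![v i, v j, v k] := by
  have hi : i ∈ ({i, j, k} : Set α) := by simp
  have hj : j ∈ ({i, j, k} : Set α) := by simp
  have hk : k ∈ ({i, j, k} : Set α) := by simp
  let g : Fin 3 → ({i, j, k} : Set α) := ![⟨i, hi⟩, ⟨j, hj⟩, ⟨k, hk⟩]
  have hinj : Function.Injective g := by
    intro a b hab
    fin_cases a <;> fin_cases b <;> simp_all [g, Subtype.ext_iff]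
  have hsurj : Function.Surjective g := by
    rintro ⟨x, hx⟩
    rcases hx with h | h | h
    · exact ⟨0, by simp [g, h]⟩
    · exact ⟨1, by simp [g, h]⟩
    · exact ⟨2, by simp [g]; exact Subtype.ext h.symm⟩
  let e : Fin 3 ≃ ({i, j, k} : Set α) := Equiv.ofBijective g ⟨hinj, hsurj⟩
  have he : (fun x : ({i, j, k} : Set α) => v x) ∘ e = ![v i, v j, v k] := by
    funext t
    fin_cases t <;> rfl
  rw [← linearIndependent_equiv e, he]

lemma mem_span_of_dep (u v w : Fin 3 → ℂ)
    (huv : LinearIndependent ℂ ![u, v])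
    (h : ¬ LinearIndependent ℂ ![u, v, w]) :
    w ∈ Submodule.span ℂ ({u, v} : Set (Fin 3 → ℂ)) := by
  rw [Fintype.not_linearIndependent_iff] at h
  obtain ⟨c, hsum, i, hi⟩ := h
  rw [Fin.sum_univ_three] at hsum
  simp only [Matrix.cons_val_zero, Matrix.cons_val_one, Matrix.head_cons,
    Matrix.cons_val_two, Matrix.tail_cons] at hsum
  by_cases h2 : c 2 = 0
  · exfalso
    have hsum' : c 0 • u + c 1 • v = 0 := by
      rw [h2] at hsum; simpa using hsum
    have hcontra : ¬ LinearIndependent ℂ ![u, v] :=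
      Fintype.not_linearIndependent_iff.mpr
        ⟨![c 0, c 1], by
          rw [Fin.sum_univ_two]; simpa using hsum', by
          fin_cases i
          · exact ⟨0, hi⟩
          · exact ⟨1, hi⟩
          · exact absurd h2 hi⟩
    exact hcontra huv
  · rw [Submodule.mem_span_pair]
    refine ⟨-(c 0 / c 2), -(c 1 / c 2), ?_⟩
    funext t
    have := congrFun hsum t
    simp only [Pi.add_apply, Pi.smul_apply, smul_eq_mul, Pi.zero_apply] at this ⊢
    linear_combination (-(c 2)⁻¹) * this + w t * (inv_mul_cancel₀ h2)

lemma dep_of_mem_span (s t u v w : Fin 3 → ℂ)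
    (hu : u ∈ Submodule.span ℂ ({s, t} : Set (Fin 3 → ℂ)))
    (hv : v ∈ Submodule.span ℂ ({s, t} : Set (Fin 3 → ℂ)))
    (hw : w ∈ Submodule.span ℂ ({s, t} : Set (Fin 3 → ℂ))) :
    ¬ LinearIndependent ℂ ![u, v, w] := by
  intro h
  set P := Submodule.span ℂ ({s, t} : Set (Fin 3 → ℂ))
  let f : Fin 3 → P := ![⟨u, hu⟩, ⟨v, hv⟩, ⟨w, hw⟩]
  have hcomp : P.subtype ∘ f = ![u, v, w] := by
    funext x; fin_cases x <;> rfl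
  have hli : LinearIndependent ℂ f := by
    apply LinearIndependent.of_comp P.subtype
    rw [hcomp]; exact h
  have hcard := hli.fintype_card_le_finrank
  have hle : finrank ℂ P ≤ ({s, t} : Set (Fin 3 → ℂ)).toFinset.card :=
    finrank_span_le_card _
  have : ({s, t} : Set (Fin 3 → ℂ)).toFinset.card ≤ 2 := by
    rw [Set.toFinset_insert, Set.toFinset_singleton]
    exact (Finset.card_insert_le _ _).trans (by simp)
  simp only [Fintype.card_fin] at hcard
  omega

lemma dep_of_four {ι : Type} [Fintype ι] (h : 4 ≤ Fintype.card ι) (v : ι → Fin 3 → ℂ) :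
    ¬ LinearIndependent ℂ v := by
  intro hli
  have := hli.fintype_card_le_finrank
  have h3 : finrank ℂ (Fin 3 → ℂ) = 3 := by simp
  omega

lemma li_triple (u v g : Fin 3 → ℂ) (huv : LinearIndependent ℂ ![u, v])
    (hg : g ∉ Submodule.span ℂ ({u, v} : Set (Fin 3 → ℂ))) :
    LinearIndependent ℂ ![u, v, g] := by
  by_contra h
  rw [Fintype.not_linearIndependent_iff] at h
  obtain ⟨c, hsum, i, hi⟩ := h
  rw [Fin.sum_univ_three] at hsum
  simp only [Matrix.cons_val_zero, Matrix.cons_val_one, Matrix.head_cons,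
    Matrix.cons_val_two, Matrix.tail_cons] at hsum
  by_cases h2 : c 2 = 0
  · have hsum' : c 0 • u + c 1 • v = 0 := by
      rw [h2] at hsum; simpa using hsum
    have hcontra : ¬ LinearIndependent ℂ ![u, v] :=
      Fintype.not_linearIndependent_iff.mpr
        ⟨![c 0, c 1], by
          rw [Fin.sum_univ_two]; simpa using hsum', by
          fin_cases i
          · exact ⟨0, hi⟩
          · exact ⟨1, hi⟩
          · exact absurd h2 hi⟩
    exact hcontra huv
  · apply hg
    rw [Submodule.mem_span_pair]
    refine ⟨-(c 0 / c 2), -(c 1 / c 2), ?_⟩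
    funext x
    have := congrFun hsum x
    simp only [Pi.add_apply, Pi.smul_apply, smul_eq_mul, Pi.zero_apply] at this ⊢
    linear_combination (-(c 2)⁻¹) * this + g x * (inv_mul_cancel₀ h2)

lemma constraint_iff (u v g : Fin 3 → ℂ) (huvg : LinearIndependent ℂ ![u, v, g])
    (a b zi zj zk : ℂ) :
    (¬ LinearIndependent ℂ ![u + zi • g, v + zj • g, (a • u + b • v) + zk • g]) ↔
      zk = a * zi + b * zj := by
  constructor
  · intro h
    rw [Fintype.not_linearIndependent_iff] at h
    obtain ⟨c, hsum, i, hi⟩ := h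
    rw [Fin.sum_univ_three] at hsum
    simp only [Matrix.cons_val_zero, Matrix.cons_val_one, Matrix.head_cons,
      Matrix.cons_val_two, Matrix.tail_cons] at hsum
    have hco := Fintype.linearIndependent_iff.mp huvg
      ![c 0 + c 2 * a, c 1 + c 2 * b, c 0 * zi + c 1 * zj + c 2 * zk] (by
        rw [Fin.sum_univ_three]
        simp only [Matrix.cons_val_zero, Matrix.cons_val_one, Matrix.head_cons,
          Matrix.cons_val_two, Matrix.tail_cons]
        funext x
        have := congrFun hsum x
        simp only [Pi.add_apply, Pi.smul_apply, smul_eq_mul, Pi.zero_apply] at this ⊢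
        linear_combination this)
    have h0 := hco 0
    have h1 := hco 1
    have h2 := hco 2
    simp only [Matrix.cons_val_zero, Matrix.cons_val_one, Matrix.head_cons,
      Matrix.cons_val_two, Matrix.tail_cons] at h0 h1 h2
    by_cases hc2 : c 2 = 0
    · exfalso
      fin_cases i
      · exact hi (show c 0 = 0 by linear_combination h0 - a * hc2)
      · exact hi (show c 1 = 0 by linear_combination h1 - b * hc2)
      · exact hi (show c 2 = 0 from hc2)
    · have key : c 2 * (zk - (a * zi + b * zj)) = 0 := by
        linear_combination h2 - zi * h0 - zj * h1
      rcases mul_eq_zero.mp key with h | h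
      · exact absurd h hc2
      · linear_combination h
  · intro h
    rw [Fintype.not_linearIndependent_iff]
    refine ⟨![a, b, -1], ?_, ⟨2, by show (-1 : ℂ) ≠ 0; norm_num⟩⟩
    rw [Fin.sum_univ_three]
    simp only [Matrix.cons_val_zero, Matrix.cons_val_one, Matrix.head_cons,
      Matrix.cons_val_two, Matrix.tail_cons]
    funext x
    simp only [Pi.add_apply, Pi.smul_apply, Pi.neg_apply, smul_eq_mul, Pi.zero_apply,
      neg_smul, one_smul]
    subst h
    ring

end LiftAux

namespace LiftAux2

open PLM

variable {α : Type} [Finite α]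

lemma line_extend (M : PLM α) (hE : M.E = Set.univ) (X t : Set α)
    (htX : t ⊆ X) (ht3 : t.ncard = 3) (htdep : ¬ M.Indep t) :
    ∃ L, (M.restrict X).IsLine L ∧ t ⊆ L := by
  set N := M.restrict X with hN
  have htE : t ⊆ N.E := by
    intro x hx
    exact ⟨by rw [hE]; trivial, htX hx⟩
  have hpre : N.LinePre t := by
    refine ⟨htE, fun h => htdep h.1, ?_⟩
    intro s hs hs3
    have hst : s = t := Set.eq_of_subset_of_ncard_le hs (by omega) (t.toFinite)
    rw [hst]
    exact fun h => htdep h.1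
  obtain ⟨L, hL, hmax⟩ := Set.Finite.exists_maximalFor Set.ncard
    {l | N.LinePre l ∧ t ⊆ l} (Set.toFinite _) ⟨t, hpre, subset_rfl⟩
  refine ⟨L, ⟨hL.1, ?_⟩, hL.2⟩
  intro l' hl' hsub
  have hmem : l' ∈ {l | N.LinePre l ∧ t ⊆ l} := ⟨hl', hL.2.trans hsub⟩
  have hcard := hmax hmem (Set.ncard_le_ncard hsub (Set.toFinite _))
  exact (Set.eq_of_subset_of_ncard_le hsub hcard (Set.toFinite _)).symm

lemma line_props (M : PLM α) (hE : M.E = Set.univ) (hs : M.Simple) (X L : Set α)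
    (hL : (M.restrict X).IsLine L) :
    3 ≤ L.ncard ∧ L ⊆ X ∧ ∀ s ⊆ L, s.ncard = 3 → ¬ M.Indep s := by
  obtain ⟨⟨hLE, hLdep, hLtri⟩, -⟩ := hL
  have hLX : L ⊆ X := fun x hx => (hLE hx).2
  refine ⟨?_, hLX, ?_⟩
  · by_contra hlt
    push_neg at hlt
    have : M.Indep L := hs L (by rw [hE]; exact Set.subset_univ _) (by omega)
    exact hLdep ⟨this, hLX⟩
  · intro s hsL hs3
    have := hLtri s hsL hs3
    exact fun h => this ⟨h, hsL.trans hLX⟩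

lemma degree_pos (N : PLM α) (L : Set α) (pnt : α) (hL : N.IsLine L) (h : pnt ∈ L) :
    1 ≤ N.degree pnt := by
  have : {l : Set α | N.IsLine l ∧ pnt ∈ l}.Nonempty := ⟨L, hL, h⟩
  have hfin : {l : Set α | N.IsLine l ∧ pnt ∈ l}.Finite := Set.toFinite _
  have := (Set.ncard_pos hfin).mpr this
  unfold PLM.degree
  omega

lemma degree_one_unique (N : PLM α) (pnt : α) (h : N.degree pnt = 1)
    {L1 L2 : Set α} (h1 : N.IsLine L1) (hm1 : pnt ∈ L1) (h2 : N.IsLine L2) (hm2 : pnt ∈ L2) :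
    L1 = L2 := by
  unfold PLM.degree at h
  obtain ⟨a, ha⟩ := Set.ncard_eq_one.mp h
  have e1 : L1 ∈ {l : Set α | N.IsLine l ∧ pnt ∈ l} := ⟨h1, hm1⟩
  have e2 : L2 ∈ {l : Set α | N.IsLine l ∧ pnt ∈ l} := ⟨h2, hm2⟩
  rw [ha] at e1 e2
  simp only [Set.mem_singleton_iff] at e1 e2
  rw [e1, e2]

end LiftAux2


set_option maxHeartbeats 1000000 in
set_option synthInstance.maxHeartbeats 400000 in
/-- Let `M` be a nilpotent simple matroid of rank at most 3 on `[d]`,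
with an ordering `p_1, …, p_d` of the points such that the degree `w_i` of `p_i` in
`M|{p_1, …, p_i}` is at most 1 for every `i`.  Let `γ ∈ V_{C(M)}` have no loops and no
coinciding points, and let `q ∈ ℂ³` be in general position with respect to `γ`.  Then
`Lift_{M,q}(γ) = {z ∈ ℂ^d : (γ_i + z_i q)_i ∈ V_{C(M)}}` is (the underlying set of) a
`ℂ`-linear subspace of `ℂ^d` of dimension `d − Σ_i w_i`. -/
theorem lift_space_is_subspace_of_dimension (d : ℕ) (M : PLM (Fin d))
    (hE : M.E = Set.univ)
    (hmat : M.IsMatroid) (hs : M.Simple) (hrk : M.RankLE3) (hnil : M.Nilpotent)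
    (p : Fin d → Fin d) (hp : Function.Bijective p)
    (w : Fin d → ℕ)
    (hw : ∀ i : Fin d, w i = (M.restrict {x | ∃ j, j ≤ i ∧ p j = x}).degree (p i))
    (hw1 : ∀ i, w i ≤ 1)
    (γ : Fin d → Fin 3 → ℂ)
    (hγ : (fun pr : Fin d × Fin 3 => γ pr.1 pr.2) ∈ circuitVariety M)
    (hzero : ∀ i, γ i ≠ 0)
    (hpair : ∀ i j : Fin d, i ≠ j → LinearIndependent ℂ ![γ i, γ j])
    (q : Fin 3 → ℂ)
    (hq : ∀ i j : Fin d, q ∉ Submodule.span ℂ ({γ i, γ j} : Set (Fin 3 → ℂ))) :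
    ∃ W : Submodule ℂ (Fin d → ℂ),
      (W : Set (Fin d → ℂ)) =
        {z : Fin d → ℂ |
          (fun pr : Fin d × Fin 3 => γ pr.1 pr.2 + z pr.1 * q pr.2) ∈ circuitVariety M} ∧
      Module.finrank ℂ W = d - ∑ i, w i := by
  classical
  have hconv : ∀ (z : Fin d → ℂ) (x : Fin d),
      cvec (fun pr : Fin d × Fin 3 => γ pr.1 pr.2 + z pr.1 * q pr.2) x = γ x + z x • q := by
    intro z x; funext t; simp [cvec, smul_eq_mul]
  have hconv0 : ∀ x : Fin d, cvec (fun pr : Fin d × Fin 3 => γ pr.1 pr.2) x = γ x := by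
    intro x; funext t; simp [cvec]
  have hdep3 : ∀ i j k : Fin d, i ≠ j → i ≠ k → j ≠ k → ¬ M.Indep {i, j, k} →
      ¬ LinearIndependent ℂ ![γ i, γ j, γ k] := by
    intro i j k hij hik hjk hdep hLI
    have hmem := hγ {i, j, k} (by rw [hE]; exact Set.subset_univ _) hdep
    unfold LinDep at hmem
    apply hmem
    have heq : (fun x : ({i, j, k} : Set (Fin d)) =>
        cvec (fun pr : Fin d × Fin 3 => γ pr.1 pr.2) ↑x)
        = fun x : ({i, j, k} : Set (Fin d)) => γ ↑x := by
      funext x; exact hconv0 x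
    rw [heq]
    exact (LiftAux.lindep_triple_iff γ hij hik hjk).mpr hLI
  have hspan : ∀ i j k : Fin d, i ≠ j → ¬ LinearIndependent ℂ ![γ i, γ j, γ k] →
      γ k ∈ Submodule.span ℂ ({γ i, γ j} : Set (Fin 3 → ℂ)) :=
    fun i j k hij h => LiftAux.mem_span_of_dep _ _ _ (hpair i j hij) h
  have hABex : ∀ i j k : Fin d, ∃ ab : ℂ × ℂ,
      (i ≠ j → i ≠ k → j ≠ k → ¬ M.Indep {i, j, k} →
        γ k = ab.1 • γ i + ab.2 • γ j) := by
    intro i j k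
    by_cases h : i ≠ j ∧ i ≠ k ∧ j ≠ k ∧ ¬ M.Indep {i, j, k}
    · obtain ⟨a, b, hab⟩ := Submodule.mem_span_pair.mp
        (hspan i j k h.1 (hdep3 i j k h.1 h.2.1 h.2.2.1 h.2.2.2))
      exact ⟨(a, b), fun _ _ _ _ => hab.symm⟩
    · exact ⟨(0, 0), fun h1 h2 h3 h4 => absurd ⟨h1, h2, h3, h4⟩ h⟩
  choose AB hAB using hABex
  set P : ℕ → Set (Fin d) := fun n => {x | ∃ j : Fin d, (j : ℕ) < n ∧ p j = x} with hPdef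
  have hPmono : ∀ m n : ℕ, m ≤ n → P m ⊆ P n := by
    rintro m n hmn x ⟨j, hj, hje⟩; exact ⟨j, by omega, hje⟩
  set cond : ℕ → Fin d → Fin d → Fin d → Prop := fun n i j k =>
    i ∈ P n ∧ j ∈ P n ∧ k ∈ P n ∧ i ≠ j ∧ i ≠ k ∧ j ≠ k ∧ ¬ M.Indep {i, j, k} with hconddef
  set W : ℕ → Submodule ℂ (Fin d → ℂ) := fun n =>
    { carrier := {z | ∀ i j k, cond n i j k →
        z k = (AB i j k).1 * z i + (AB i j k).2 * z j}
      add_mem' := by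
        intro x y hx hy i j k hc
        simp only [Pi.add_apply]
        rw [hx i j k hc, hy i j k hc]; ring
      zero_mem' := by intro i j k hc; simp
      smul_mem' := by
        intro c x hx i j k hc
        simp only [Pi.smul_apply, smul_eq_mul]
        rw [hx i j k hc]; ring } with hWdef
  have hWmem : ∀ (n : ℕ) (z : Fin d → ℂ), z ∈ W n ↔ ∀ i j k, cond n i j k →
      z k = (AB i j k).1 * z i + (AB i j k).2 * z j := fun n z => Iff.rfl
  have hWgeo : ∀ (n : ℕ) (z : Fin d → ℂ), z ∈ W n ↔ ∀ i j k, cond n i j k →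
      ¬ LinearIndependent ℂ ![γ i + z i • q, γ j + z j • q, γ k + z k • q] := by
    intro n z
    rw [hWmem n z]
    apply forall_congr'; intro i
    apply forall_congr'; intro j
    apply forall_congr'; intro k
    apply imp_congr_right; intro hc
    obtain ⟨-, -, -, hij, hik, hjk, hdep⟩ := hc
    have hab := hAB i j k hij hik hjk hdep
    have hli : LinearIndependent ℂ ![γ i, γ j, q] :=
      LiftAux.li_triple _ _ _ (hpair i j hij) (hq i j)
    have hkey := LiftAux.constraint_iff (γ i) (γ j) q hli
      (AB i j k).1 (AB i j k).2 (z i) (z j) (z k)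
    rw [← hab] at hkey
    exact hkey.symm
  have hPd : ∀ x : Fin d, x ∈ P d := by
    intro x
    obtain ⟨j, hj⟩ := hp.surjective x
    exact ⟨j, j.isLt, hj⟩
  have htr3 : ∀ i j k : Fin d, i ≠ j → i ≠ k → j ≠ k →
      ({i, j, k} : Set (Fin d)).ncard = 3 :=
    fun i j k hij hik hjk => Set.ncard_eq_three.mpr ⟨i, j, k, hij, hik, hjk, rfl⟩
  have hLift : ∀ z : Fin d → ℂ,
      ((fun pr : Fin d × Fin 3 => γ pr.1 pr.2 + z pr.1 * q pr.2) ∈ circuitVariety M) ↔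
        z ∈ W d := by
    intro z
    constructor
    · intro h
      rw [hWgeo]
      rintro i j k ⟨-, -, -, hij, hik, hjk, hdep⟩
      have hmem := h {i, j, k} (by rw [hE]; exact Set.subset_univ _) hdep
      unfold LinDep at hmem
      intro hLI
      apply hmem
      have heq : (fun x : ({i, j, k} : Set (Fin d)) =>
          cvec (fun pr : Fin d × Fin 3 => γ pr.1 pr.2 + z pr.1 * q pr.2) ↑x)
          = fun x : ({i, j, k} : Set (Fin d)) => γ ↑x + z ↑x • q := by
        funext x; exact hconv z x
      rw [heq]
      exact (LiftAux.lindep_triple_iff (fun x => γ x + z x • q) hij hik hjk).mpr hLI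
    · intro hz S hS hdep
      unfold LinDep
      have hfin : S.Finite := S.toFinite
      rcases lt_or_ge S.ncard 3 with hlt | hge
      · exact absurd (hs S (by rw [hE]; exact Set.subset_univ _) (by omega)) hdep
      rcases eq_or_lt_of_le hge with h3 | h4
      · obtain ⟨i, j, k, hij, hik, hjk, rfl⟩ := Set.ncard_eq_three.mp h3.symm
        have hgeo := (hWgeo d z).mp hz i j k ⟨hPd i, hPd j, hPd k, hij, hik, hjk, hdep⟩
        have heq : (fun x : ({i, j, k} : Set (Fin d)) =>
            cvec (fun pr : Fin d × Fin 3 => γ pr.1 pr.2 + z pr.1 * q pr.2) ↑x)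
            = fun x : ({i, j, k} : Set (Fin d)) => γ ↑x + z ↑x • q := by
          funext x; exact hconv z x
        rw [heq]
        exact fun h => hgeo
          ((LiftAux.lindep_triple_iff (fun x => γ x + z x • q) hij hik hjk).mp h)
      · haveI : Fintype S := hfin.fintype
        apply LiftAux.dep_of_four
        rw [← Nat.card_eq_fintype_card, Nat.card_coe_set_eq]
        omega
  have hins : ∀ (n : ℕ) (hn : n < d), P (n + 1) = insert (p ⟨n, hn⟩) (P n) := by
    intro n hn
    ext x
    simp only [Set.mem_insert_iff, hPdef, Set.mem_setOf_eq]
    constructor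
    · rintro ⟨j, hj, rfl⟩
      rcases Nat.lt_succ_iff_lt_or_eq.mp hj with h | h
      · exact Or.inr ⟨j, h, rfl⟩
      · exact Or.inl (congrArg p (Fin.ext h))
    · rintro (rfl | ⟨j, hj, rfl⟩)
      · exact ⟨⟨n, hn⟩, Nat.lt_succ_self n, rfl⟩
      · exact ⟨j, by omega, rfl⟩
  have hpn_not : ∀ (n : ℕ) (hn : n < d), p ⟨n, hn⟩ ∉ P n := by
    rintro n hn ⟨j, hj, hje⟩
    have h1 := hp.injective hje
    have h2 : (j : ℕ) = n := by rw [h1]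
    omega
  have hfilter : ∀ (n : ℕ) (hn : n < d),
      Finset.univ.filter (fun i : Fin d => (i : ℕ) < n + 1) =
        insert ⟨n, hn⟩ (Finset.univ.filter (fun i : Fin d => (i : ℕ) < n)) := by
    intro n hn
    ext x
    simp only [Finset.mem_filter, Finset.mem_insert, Finset.mem_univ, true_and, Fin.ext_iff]
    omega
  have key : ∀ n : ℕ, n ≤ d → Module.finrank ℂ (W n) +
      ∑ i ∈ Finset.univ.filter (fun i : Fin d => (i : ℕ) < n), w i = d := by
    intro n
    induction n with
    | zero =>
      intro _
      have hW0 : W 0 = ⊤ := by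
        apply eq_top_iff.mpr
        intro z _ i j k hc
        exact absurd hc.1 (by rintro ⟨j', hj', -⟩; omega)
      have hf0 : Finset.univ.filter (fun i : Fin d => (i : ℕ) < 0) = ∅ := by
        apply Finset.filter_false_of_mem; intro i _; omega
      rw [hW0, hf0, Finset.sum_empty, add_zero, finrank_top]
      simp
    | succ n ih =>
      intro hn1
      have hn : n < d := hn1
      have ihv := ih (le_of_lt hn)
      set pn := p ⟨n, hn⟩ with hpn
      have hpmem : pn ∈ P (n + 1) := ⟨⟨n, hn⟩, Nat.lt_succ_self n, rfl⟩
      have hXeq : {x | ∃ j, j ≤ (⟨n, hn⟩ : Fin d) ∧ p j = x} = P (n + 1) := by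
        ext x
        simp only [Set.mem_setOf_eq, hPdef]
        constructor
        · rintro ⟨j, hj, rfl⟩
          exact ⟨j, by have := Fin.le_def.mp hj; simp at this ⊢; omega, rfl⟩
        · rintro ⟨j, hj, rfl⟩
          exact ⟨j, Fin.le_def.mpr (by simp; omega), rfl⟩
      have hwn : w ⟨n, hn⟩ = (M.restrict (P (n + 1))).degree pn := by
        rw [hw ⟨n, hn⟩, hXeq]
      have htl : ∀ i j k : Fin d, cond (n + 1) i j k →
          ∃ L, (M.restrict (P (n + 1))).IsLine L ∧ ({i, j, k} : Set (Fin d)) ⊆ L := by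
        rintro i j k ⟨hi, hj, hk, hij, hik, hjk, hdep⟩
        apply LiftAux2.line_extend M hE (P (n + 1)) {i, j, k} ?_ (htr3 i j k hij hik hjk) hdep
        intro x hx
        simp only [Set.mem_insert_iff, Set.mem_singleton_iff] at hx
        rcases hx with rfl | rfl | rfl <;> assumption
      have hWsucc_le : W (n + 1) ≤ W n := by
        rintro z hz i j k ⟨hi, hj, hk, h4, h5, h6, h7⟩
        exact hz i j k ⟨hPmono n (n + 1) (by omega) hi, hPmono n (n + 1) (by omega) hj,
          hPmono n (n + 1) (by omega) hk, h4, h5, h6, h7⟩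
      have hmemcase : ∀ x ∈ P (n + 1), x ≠ pn → x ∈ P n := by
        intro x hx hne
        rw [hins n hn] at hx
        rcases hx with h | h
        · exact absurd h hne
        · exact h
      rcases Nat.le_one_iff_eq_zero_or_eq_one.mp (hw1 ⟨n, hn⟩) with hw0 | hw1'
      · have hWeq : W (n + 1) = W n := by
          apply le_antisymm hWsucc_le
          intro z hz i j k hc
          obtain ⟨hi, hj, hk, hij, hik, hjk, hdep⟩ := hc
          by_cases hpin : pn ∈ ({i, j, k} : Set (Fin d))
          · exfalso
            obtain ⟨L, hL, hsub⟩ := htl i j k ⟨hi, hj, hk, hij, hik, hjk, hdep⟩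
            have hge1 := LiftAux2.degree_pos _ L pn hL (hsub hpin)
            have hd0 : (M.restrict (P (n + 1))).degree pn = 0 := by rw [← hwn]; exact hw0
            rw [hd0] at hge1
            omega
          · have hine : i ≠ pn := fun h => hpin (by rw [← h]; exact Set.mem_insert _ _)
            have hjne : j ≠ pn := fun h => hpin
              (by rw [← h]; exact Set.mem_insert_of_mem _ (Set.mem_insert _ _))
            have hkne : k ≠ pn := fun h => hpin
              (by rw [← h]; exact Set.mem_insert_of_mem _ (Set.mem_insert_of_mem _ rfl))
            exact hz i j k ⟨hmemcase i hi hine, hmemcase j hj hjne, hmemcase k hk hkne,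
              hij, hik, hjk, hdep⟩
        rw [hWeq, hfilter n hn, Finset.sum_insert (by simp), hw0, zero_add]
        exact ihv
      · have hdeg1 : (M.restrict (P (n + 1))).degree pn = 1 := by rw [← hwn]; exact hw1'
        unfold PLM.degree at hdeg1
        obtain ⟨L0, hL0⟩ := Set.ncard_eq_one.mp hdeg1
        have hL0line : (M.restrict (P (n + 1))).IsLine L0 ∧ pn ∈ L0 := by
          have hmem : L0 ∈ {l : Set (Fin d) |
              (M.restrict (P (n + 1))).IsLine l ∧ pn ∈ l} := by rw [hL0]; rfl
          exact hmem
        have huniqL : ∀ L, (M.restrict (P (n + 1))).IsLine L → pn ∈ L → L = L0 := by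
          intro L hL hm
          have hmem : L ∈ {l : Set (Fin d) |
              (M.restrict (P (n + 1))).IsLine l ∧ pn ∈ l} := ⟨hL, hm⟩
          rw [hL0] at hmem
          exact hmem
        obtain ⟨h3L0, hL0X, hL0tri⟩ :=
          LiftAux2.line_props M hE hs (P (n + 1)) L0 hL0line.1
        have hdiff : 2 ≤ (L0 \ {pn}).ncard := by
          rw [Set.ncard_diff_singleton_of_mem hL0line.2]
          omega
        obtain ⟨a, ha, b, hb, hab⟩ := (Set.one_lt_ncard (s := L0 \ {pn}) (Set.toFinite _)).mp (by omega)
        have haL : a ∈ L0 := ha.1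
        have hbL : b ∈ L0 := hb.1
        have hane : a ≠ pn := by simpa using ha.2
        have hbne : b ≠ pn := by simpa using hb.2
        have haP : a ∈ P n := hmemcase a (hL0X haL) hane
        have hbP : b ∈ P n := hmemcase b (hL0X hbL) hbne
        have habsub : ({a, b, pn} : Set (Fin d)) ⊆ L0 := by
          intro x hx
          simp only [Set.mem_insert_iff, Set.mem_singleton_iff] at hx
          rcases hx with rfl | rfl | rfl
          exacts [haL, hbL, hL0line.2]
        have hdep_abp : ¬ M.Indep {a, b, pn} :=
          hL0tri _ habsub (htr3 a b pn hab hane hbne)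
        have hconda : cond (n + 1) a b pn := ⟨hPmono n (n + 1) (by omega) haP,
          hPmono n (n + 1) (by omega) hbP, hpmem, hab, hane, hbne, hdep_abp⟩
        set a1 := (AB a b pn).1 with ha1
        set b1 := (AB a b pn).2 with hb1
        set f : (Fin d → ℂ) →ₗ[ℂ] ℂ :=
          LinearMap.proj pn - a1 • LinearMap.proj a - b1 • LinearMap.proj b with hfdef
        have hf : ∀ z : Fin d → ℂ, f z = z pn - a1 * z a - b1 * z b := by
          intro z
          simp [hfdef, LinearMap.proj_apply, smul_eq_mul]
        have hWeq : W (n + 1) = W n ⊓ LinearMap.ker f := by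
          apply le_antisymm
          · refine le_inf hWsucc_le ?_
            intro z hz
            rw [LinearMap.mem_ker, hf]
            rw [hz a b pn hconda]
            ring
          · rintro z ⟨hzW, hzker⟩
            rw [hWgeo]
            rintro i j k ⟨hi, hj, hk, hij, hik, hjk, hdep⟩
            by_cases hpin : pn ∈ ({i, j, k} : Set (Fin d))
            · obtain ⟨L, hL, hsub⟩ := htl i j k ⟨hi, hj, hk, hij, hik, hjk, hdep⟩
              have hLeq : L = L0 := huniqL L hL (hsub hpin)
              rw [hLeq] at hsub
              have hfz : z pn = a1 * z a + b1 * z b := by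
                have hzker' : f z = 0 := hzker
                rw [hf] at hzker'
                linear_combination hzker'
              have hmemspan : ∀ x ∈ L0, γ x + z x • q ∈
                  Submodule.span ℂ ({γ a + z a • q, γ b + z b • q} : Set (Fin 3 → ℂ)) := by
                intro x hx
                by_cases hxa : x = a
                · subst hxa; exact Submodule.subset_span (Set.mem_insert _ _)
                by_cases hxb : x = b
                · subst hxb; exact Submodule.subset_span (Set.mem_insert_of_mem _ rfl)
                by_cases hxp : x = pn
                · subst hxp
                  have habg : γ pn = a1 • γ a + b1 • γ b :=
                    hAB a b pn hab hane hbne hdep_abp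
                  rw [Submodule.mem_span_pair]
                  refine ⟨a1, b1, ?_⟩
                  funext t
                  have h1 := congrFun habg t
                  simp only [Pi.add_apply, Pi.smul_apply, smul_eq_mul] at h1 ⊢
                  linear_combination -h1 - q t * hfz
                · have hxP : x ∈ P n := hmemcase x (hL0X hx) hxp
                  have hxna : a ≠ x := fun h => hxa h.symm
                  have hxnb : b ≠ x := fun h => hxb h.symm
                  have habxsub : ({a, b, x} : Set (Fin d)) ⊆ L0 := by
                    intro y hy
                    simp only [Set.mem_insert_iff, Set.mem_singleton_iff] at hy
                    rcases hy with rfl | rfl | rfl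
                    exacts [haL, hbL, hx]
                  have hdepx : ¬ M.Indep {a, b, x} :=
                    hL0tri _ habxsub (htr3 a b x hab hxna hxnb)
                  have hcx : cond n a b x := ⟨haP, hbP, hxP, hab, hxna, hxnb, hdepx⟩
                  have hzx := hzW a b x hcx
                  have habg := hAB a b x hab hxna hxnb hdepx
                  rw [Submodule.mem_span_pair]
                  refine ⟨(AB a b x).1, (AB a b x).2, ?_⟩
                  funext t
                  have h1 := congrFun habg t
                  simp only [Pi.add_apply, Pi.smul_apply, smul_eq_mul] at h1 ⊢
                  linear_combination -h1 - q t * hzx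
              exact LiftAux.dep_of_mem_span _ _ _ _ _
                (hmemspan i (hsub (Set.mem_insert _ _)))
                (hmemspan j (hsub (Set.mem_insert_of_mem _ (Set.mem_insert _ _))))
                (hmemspan k (hsub (Set.mem_insert_of_mem _ (Set.mem_insert_of_mem _ rfl))))
            · have hine : i ≠ pn := fun h => hpin (by rw [← h]; exact Set.mem_insert _ _)
              have hjne : j ≠ pn := fun h => hpin
                (by rw [← h]; exact Set.mem_insert_of_mem _ (Set.mem_insert _ _))
              have hkne : k ≠ pn := fun h => hpin
                (by rw [← h]; exact Set.mem_insert_of_mem _ (Set.mem_insert_of_mem _ rfl))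
              exact (hWgeo n z).mp hzW i j k ⟨hmemcase i hi hine, hmemcase j hj hjne,
                hmemcase k hk hkne, hij, hik, hjk, hdep⟩
        have hz0mem : (fun x : Fin d => if x = pn then (1 : ℂ) else 0) ∈ W n := by
          rw [hWmem]
          intro i j k hc
          obtain ⟨hi, hj, hk, -, -, -, -⟩ := hc
          have hne : ∀ y ∈ P n, y ≠ pn := by
            intro y hy h
            rw [h] at hy
            exact hpn_not n hn hy
          simp [hne i hi, hne j hj, hne k hk]
        set f' : (W n) →ₗ[ℂ] ℂ := f.comp (W n).subtype with hf'def
        have hval : f' ⟨_, hz0mem⟩ = 1 := by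
          simp only [hf'def, LinearMap.comp_apply, Submodule.subtype_apply]
          rw [hf]
          simp [hane, hbne]
        have hsurj : Function.Surjective f' := by
          intro c
          refine ⟨c • ⟨_, hz0mem⟩, ?_⟩
          rw [map_smul, hval, smul_eq_mul, mul_one]
        have hrange : LinearMap.range f' = ⊤ := LinearMap.range_eq_top.mpr hsurj
        have hker : LinearMap.ker f' = Submodule.comap (W n).subtype (W (n + 1)) := by
          ext x
          simp only [LinearMap.mem_ker, hf'def, LinearMap.comp_apply,
            Submodule.subtype_apply, Submodule.mem_comap]
          rw [hWeq]
          simp only [Submodule.mem_inf, LinearMap.mem_ker]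
          exact ⟨fun h => ⟨x.2, h⟩, fun h => h.2⟩
        have e := Submodule.comapSubtypeEquivOfLe hWsucc_le
        have hrk := LinearMap.finrank_range_add_finrank_ker f'
        rw [hrange, hker] at hrk
        have hdim : Module.finrank ℂ (W n) = 1 + Module.finrank ℂ (W (n + 1)) := by
          rw [← hrk]
          congr 1
          · rw [finrank_top, Module.finrank_self]
          · exact e.finrank_eq
        rw [hfilter n hn, Finset.sum_insert (by simp), hw1']
        rw [hdim] at ihv
        set r1 := Module.finrank ℂ (W (n + 1))
        set s1 := ∑ i ∈ Finset.univ.filter (fun i : Fin d => (i : ℕ) < n), w i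
        omega
  refine ⟨W d, ?_, ?_⟩
  · ext z
    simp only [SetLike.mem_coe, Set.mem_setOf_eq]
    exact (hLift z).symm
  · have hk := key d le_rfl
    have hfu : Finset.univ.filter (fun i : Fin d => (i : ℕ) < d) = Finset.univ := by
      apply Finset.filter_true_of_mem; intro i _; exact i.isLt
    rw [hfu] at hk
    set r := Module.finrank ℂ (W d)
    set s := ∑ i : Fin d, w i
    omega
end

section
/- Every cactus configuration is nilpotent. -/
/-! Cactus configurations (over the ground type `ℕ`, so that free gluings have room
for fresh points). -/

namespace PLM

/-- A line configuration: the uniform matroid `U_{2,m}` on `m ≥ 3` elements. -/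
def IsLineConfig (M : PLM ℕ) : Prop :=
  M.E.Finite ∧ 3 ≤ M.E.ncard ∧ ∀ I, M.Indep I ↔ I ⊆ M.E ∧ I.ncard ≤ 2

/-- A cycle: a simple matroid of rank at most 3 whose lines can be cyclically ordered
`l_1, …, l_n` (`n ≥ 3`) with distinct points `p_1, …, p_n` such that `p_i` lies exactly on
`l_i` and `l_{i+1}` (indices mod `n`) and every other point lies on exactly one line. -/
def IsCycle (M : PLM ℕ) : Prop :=
  M.IsMatroid ∧ M.Simple ∧ M.RankLE3 ∧
  ∃ m : ℕ, ∃ (p : Fin (m + 3) → ℕ) (l : Fin (m + 3) → Set ℕ),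
    Function.Injective p ∧ Function.Injective l ∧ (∀ i, p i ∈ M.E) ∧
    (∀ L, M.IsLine L ↔ ∃ i, L = l i) ∧
    (∀ i : Fin (m + 3), {L | M.IsLine L ∧ p i ∈ L} = {l i, l (i + 1)}) ∧
    (∀ x ∈ M.E, (∀ i, x ≠ p i) → ({L | M.IsLine L ∧ x ∈ L}).ncard = 1)

/-- Replace the point `p` by the point `P` in the set `l` (used to transport lines
through a free gluing). -/
def relabelLine (l : Set ℕ) (p P : ℕ) : Set ℕ :=
  {x | (x ∈ l ∧ x ≠ p) ∨ (x = P ∧ p ∈ l)}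

/-- `G` is the free gluing of `M` and `N` at the points `p ∈ M.E` and `q ∈ N.E`,
identified to the new point `P`: the ground set is the disjoint union with `p, q`
identified to `P`, the lines are the (relabelled) lines of `M` and of `N`, and the
dependent 3-sets are exactly the 3-element subsets of these lines. -/
def IsFreeGluing (M N G : PLM ℕ) (p q P : ℕ) : Prop :=
  p ∈ M.E ∧ q ∈ N.E ∧ Disjoint M.E N.E ∧ P ∉ M.E ∧ P ∉ N.E ∧
  G.E = insert P ((M.E \ {p}) ∪ (N.E \ {q})) ∧
  (∀ I : Set ℕ, G.Indep I ↔ I ⊆ G.E ∧ I.ncard ≤ 3 ∧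
    (I.ncard = 3 → ¬ ∃ l' : Set ℕ,
      ((∃ l, M.IsLine l ∧ l' = relabelLine l p P) ∨
        (∃ l, N.IsLine l ∧ l' = relabelLine l q P)) ∧ I ⊆ l'))

/-- A connected cactus configuration: obtained from a line configuration or a cycle by
iteratively freely gluing line configurations or cycles. -/
inductive IsConnectedCactus : PLM ℕ → Prop
  | line (M : PLM ℕ) : IsLineConfig M → IsConnectedCactus M
  | cycle (M : PLM ℕ) : IsCycle M → IsConnectedCactus M
  | glue (M N G : PLM ℕ) (p q P : ℕ) : IsConnectedCactus M →
      (IsLineConfig N ∨ IsCycle N) → IsFreeGluing M N G p q P → IsConnectedCactus G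

/-- Two points are directly connected if they lie on a common circuit. -/
def ConnStep (M : PLM ℕ) (x y : ℕ) : Prop := ∃ C, M.Circuit C ∧ x ∈ C ∧ y ∈ C

/-- The connected component of a point of the ground set. -/
def component (M : PLM ℕ) (x : ℕ) : Set ℕ :=
  {y ∈ M.E | Relation.ReflTransGen (ConnStep M) x y}

/-- A cactus configuration: a simple rank-3 matroid each of whose connected components
is a connected cactus configuration. -/
def IsCactusConfig (M : PLM ℕ) : Prop :=
  M.IsMatroid ∧ M.Simple ∧ M.RankEq3 ∧
  ∀ x ∈ M.E, IsConnectedCactus (M.restrict (M.component x))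

end PLM

/-! Realization spaces for matroids on a ground set `[d] = {0, …, d-1} ⊆ ℕ`,
with configurations in `ℂ^{3d}`. -/

/-- The vector of a configuration attached to the natural number `i < d`. -/
def cvecN (d : ℕ) (γ : Config d) (i : ℕ) : Fin 3 → ℂ :=
  if h : i < d then cvec γ ⟨i, h⟩ else 0

/-- The family of vectors indexed by `S ⊆ ℕ` is linearly dependent. -/
def LinDepN (d : ℕ) (γ : Config d) (S : Set ℕ) : Prop :=
  ¬ LinearIndependent ℂ (fun i : S => cvecN d γ i)

/-- The realization space `Γ_M ⊆ ℂ^{3d}` of a matroid with ground set `[d] ⊆ ℕ`. -/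
def realizationSpaceN (d : ℕ) (M : PLM ℕ) : Set (Config d) :=
  {γ | ∀ S ⊆ M.E, (¬ M.Indep S ↔ LinDepN d γ S)}

/-- The circuit variety `V_{C(M)} ⊆ ℂ^{3d}` of a matroid with ground set `[d] ⊆ ℕ`. -/
def circuitVarietyN (d : ℕ) (M : PLM ℕ) : Set (Config d) :=
  {γ | ∀ S ⊆ M.E, ¬ M.Indep S → LinDepN d γ S}

/-- The matroid variety `V_M ⊆ ℂ^{3d}`: the zero locus of the vanishing ideal of `Γ_M`. -/
noncomputable def matroidVarietyN (d : ℕ) (M : PLM ℕ) : Set (Config d) :=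
  MvPolynomial.zeroLocus ℂ (MvPolynomial.vanishingIdeal ℂ (realizationSpaceN d M))

namespace CactusProof

open Set

variable {M : PLM ℕ}

/-- The set of "fat" lines through `g` relative to `X` is a subsingleton. -/
def GoodAt (M : PLM ℕ) (X : Set ℕ) (g : ℕ) : Prop :=
  {l | M.IsLine l ∧ g ∈ l ∧ 3 ≤ (l ∩ X).ncard}.Subsingleton

/-- The key invariant. -/
def Pres (M : PLM ℕ) : Prop :=
  M.E.Finite ∧
  (∀ l, M.IsLine l → l ⊆ M.E ∧ 3 ≤ l.ncard) ∧
  (∀ l l', M.IsLine l → M.IsLine l' → l ≠ l' → (l ∩ l').Subsingleton) ∧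
  (∀ I, M.Indep I ↔ I ⊆ M.E ∧ I.ncard ≤ 3 ∧
      (I.ncard = 3 → ¬∃ l, M.IsLine l ∧ I ⊆ l)) ∧
  (∀ X, X ⊆ M.E → X.Nonempty → ∃ g ∈ X, GoodAt M X g)

def PresS (M : PLM ℕ) : Prop := Pres M ∧
  ∀ X, X ⊆ M.E → X.Nontrivial →
    ∃ g₁ ∈ X, ∃ g₂ ∈ X, g₁ ≠ g₂ ∧ GoodAt M X g₁ ∧ GoodAt M X g₂

lemma ncard_pair_le (a b : ℕ) : ({a, b} : Set ℕ).ncard ≤ 2 := by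
  refine le_trans (Set.ncard_insert_le _ _) ?_
  simp [Set.ncard_singleton]

lemma ncard_triple {a b x : ℕ} (hab : a ≠ b) (hxa : x ≠ a) (hxb : x ≠ b) :
    ({a, b, x} : Set ℕ).ncard = 3 := by
  rw [Set.ncard_insert_of_notMem (by simp [hab, hxa.symm]),
      Set.ncard_insert_of_notMem (by simp [hxb.symm]), Set.ncard_singleton]

/-- Lines of a matroid presented by an explicit family `L` are exactly the members of `L`. -/
lemma lines_eq {L : Set (Set ℕ)} (hfin : M.E.Finite)
    (h2 : ∀ l ∈ L, l ⊆ M.E ∧ 3 ≤ l.ncard)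
    (h3 : ∀ l ∈ L, ∀ l' ∈ L, l ≠ l' → (l ∩ l').Subsingleton)
    (h4 : ∀ I, M.Indep I ↔ I ⊆ M.E ∧ I.ncard ≤ 3 ∧ (I.ncard = 3 → ¬∃ l ∈ L, I ⊆ l)) :
    ∀ l, M.IsLine l ↔ l ∈ L := by
  -- any dependent 3-set lies on a member of L
  have hdep3 : ∀ t : Set ℕ, t ⊆ M.E → t.ncard = 3 → ¬ M.Indep t → ∃ l ∈ L, t ⊆ l := by
    intro t htE ht3 hdep
    by_contra hno
    exact hdep ((h4 t).mpr ⟨htE, le_of_eq ht3, fun _ => hno⟩)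
  -- members of L are LinePre
  have hLP : ∀ l ∈ L, M.LinePre l := by
    intro l hl
    obtain ⟨hlE, hl3⟩ := h2 l hl
    refine ⟨hlE, ?_, ?_⟩
    · intro hI
      rcases (h4 l).mp hI with ⟨-, hle3, hcl⟩
      have : l.ncard = 3 := le_antisymm hle3 hl3
      exact hcl this ⟨l, hl, subset_rfl⟩
    · intro t ht ht3 hI
      rcases (h4 t).mp hI with ⟨-, -, hcl⟩
      exact hcl ht3 ⟨l, hl, ht⟩
  -- closure property: a dependent 3-set containing two points of l ∈ L lies in l
  have hpin : ∀ l ∈ L, ∀ a ∈ l, ∀ b ∈ l, a ≠ b → ∀ x, ({a, b, x} : Set ℕ) ⊆ M.E →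
      ¬ M.Indep {a, b, x} → x ∈ l := by
    intro l hl a ha b hb hab x hsub hdep
    by_cases hxl : x ∈ l
    · exact hxl
    have hxa : x ≠ a := fun h => hxl (h ▸ ha)
    have hxb : x ≠ b := fun h => hxl (h ▸ hb)
    obtain ⟨m, hm, htm⟩ := hdep3 _ hsub (ncard_triple hab hxa hxb) hdep
    have hml : m = l := by
      by_contra hne
      exact hab (h3 m hm l hl hne ⟨htm (by simp), ha⟩ ⟨htm (by simp), hb⟩)
    exact hml ▸ htm (by simp)
  intro l
  constructor
  · rintro ⟨hLPl, hmax⟩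
    obtain ⟨hlE, hdepl, h3sub⟩ := hLPl
    have hlfin : l.Finite := hfin.subset hlE
    have hl3 : 3 ≤ l.ncard := by
      by_contra hlt
      push_neg at hlt
      exact hdepl ((h4 l).mpr ⟨hlE, by omega, fun h => absurd h (by omega)⟩)
    obtain ⟨t, htl, ht3⟩ := Set.exists_subset_card_eq hl3
    obtain ⟨m, hm, htm⟩ := hdep3 t (htl.trans hlE) ht3 (h3sub t htl ht3)
    obtain ⟨a, ha, b, hb, hab⟩ := (Set.one_lt_ncard (hlfin.subset htl)).mp (by omega)
    have hlm : l ⊆ m := by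
      intro x hx
      by_cases hxt : x = a ∨ x = b
      · rcases hxt with h | h
        · subst h; exact htm ha
        · subst h; exact htm hb
      push_neg at hxt
      have hsub : ({a, b, x} : Set ℕ) ⊆ l := by
        intro z hz
        simp only [Set.mem_insert_iff, Set.mem_singleton_iff] at hz
        rcases hz with rfl | rfl | rfl
        exacts [htl ha, htl hb, hx]
      exact hpin m hm a (htm ha) b (htm hb) hab x (hsub.trans hlE)
        (h3sub _ hsub (ncard_triple hab hxt.1 hxt.2))
    have := hmax m (hLP m hm) hlm
    exact this ▸ hm
  · intro hl
    refine ⟨hLP l hl, fun l' hl' hsub => ?_⟩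
    obtain ⟨hlE, hl3⟩ := h2 l hl
    obtain ⟨a, ha, b, hb, hab⟩ := (Set.one_lt_ncard (hfin.subset hlE)).mp (by omega)
    refine Set.Subset.antisymm ?_ hsub
    intro x hx
    by_cases hxab : x = a ∨ x = b
    · rcases hxab with h | h
      · subst h; exact ha
      · subst h; exact hb
    push_neg at hxab
    have hsub' : ({a, b, x} : Set ℕ) ⊆ l' := by
      intro z hz
      simp only [Set.mem_insert_iff, Set.mem_singleton_iff] at hz
      rcases hz with rfl | rfl | rfl
      exacts [hsub ha, hsub hb, hx]
    exact hpin l hl a ha b hb hab x (hsub'.trans hl'.1)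
      (hl'.2.2 _ hsub' (ncard_triple hab hxab.1 hxab.2))

lemma subsingleton_ncard_le_one {s : Set (Set ℕ)} (h : s.Subsingleton) : s.ncard ≤ 1 := by
  rcases h.eq_empty_or_singleton with rfl | ⟨a, rfl⟩ <;> simp

/-- `Sstep` preserves the invariant. -/
lemma pres_sstep (hP : Pres M) : Pres M.Sstep := by
  obtain ⟨hfin, h2, h3, h4, h5⟩ := hP
  set S : Set ℕ := {p ∈ M.E | 2 ≤ M.degree p} with hS
  have hE' : M.Sstep.E = M.E ∩ S := rfl
  have hI' : ∀ I, M.Sstep.Indep I ↔ M.Indep I ∧ I ⊆ S := fun I => Iff.rfl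
  set L' : Set (Set ℕ) := {m | ∃ l, M.IsLine l ∧ m = l ∩ S ∧ 3 ≤ (l ∩ S).ncard} with hL'
  have hfin' : M.Sstep.E.Finite := hfin.inter_of_left _
  have h2' : ∀ m ∈ L', m ⊆ M.Sstep.E ∧ 3 ≤ m.ncard := by
    rintro m ⟨l, hl, rfl, hcard⟩
    exact ⟨Set.inter_subset_inter_left _ (h2 l hl).1, hcard⟩
  have h3' : ∀ m ∈ L', ∀ m' ∈ L', m ≠ m' → (m ∩ m').Subsingleton := by
    rintro m ⟨l, hl, rfl, -⟩ m' ⟨l', hl', rfl, -⟩ hne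
    have hll' : l ≠ l' := fun h => hne (by rw [h])
    exact fun x hx y hy => h3 l l' hl hl' hll' ⟨hx.1.1, hx.2.1⟩ ⟨hy.1.1, hy.2.1⟩
  have h4' : ∀ I, M.Sstep.Indep I ↔ I ⊆ M.Sstep.E ∧ I.ncard ≤ 3 ∧
      (I.ncard = 3 → ¬∃ m ∈ L', I ⊆ m) := by
    intro I
    rw [hI', h4 I, hE']
    constructor
    · rintro ⟨⟨hIE, hc3, hcl⟩, hIS⟩
      refine ⟨Set.subset_inter hIE hIS, hc3, fun h3c ⟨m, hm, hIm⟩ => ?_⟩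
      obtain ⟨l, hl, rfl, -⟩ := hm
      exact hcl h3c ⟨l, hl, hIm.trans Set.inter_subset_left⟩
    · rintro ⟨hIE, hc3, hcl⟩
      have hIS : I ⊆ S := hIE.trans Set.inter_subset_right
      refine ⟨⟨hIE.trans Set.inter_subset_left, hc3, fun h3c ⟨l, hl, hIl⟩ => ?_⟩, hIS⟩
      have hIlS : I ⊆ l ∩ S := Set.subset_inter hIl hIS
      have : 3 ≤ (l ∩ S).ncard := by
        rw [← h3c]
        exact Set.ncard_le_ncard hIlS (hfin.subset ((h2 l hl).1.trans' Set.inter_subset_left))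
      exact hcl h3c ⟨l ∩ S, ⟨l, hl, rfl, this⟩, hIlS⟩
  have hlines := lines_eq hfin' h2' h3' h4'
  have hiff : ∀ I : Set ℕ, (∃ m ∈ L', I ⊆ m) ↔ ∃ l, M.Sstep.IsLine l ∧ I ⊆ l :=
    fun I => ⟨fun ⟨m, hm, h⟩ => ⟨m, (hlines m).mpr hm, h⟩,
      fun ⟨m, hm, h⟩ => ⟨m, (hlines m).mp hm, h⟩⟩
  have h4'' : ∀ I, M.Sstep.Indep I ↔ I ⊆ M.Sstep.E ∧ I.ncard ≤ 3 ∧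
      (I.ncard = 3 → ¬∃ l, M.Sstep.IsLine l ∧ I ⊆ l) := by
    intro I
    rw [h4' I, hiff I]
  refine ⟨hfin', fun m hm => h2' m (hlines m |>.mp hm),
    fun m m' hm hm' => h3' m ((hlines m).mp hm) m' ((hlines m').mp hm'), h4'', ?_⟩
  intro X hX hXne
  obtain ⟨g, hgX, hgood⟩ := h5 X (hX.trans (hE' ▸ Set.inter_subset_left)) hXne
  refine ⟨g, hgX, ?_⟩
  have hXS : X ⊆ S := hX.trans (hE' ▸ Set.inter_subset_right)
  intro m₁ hm₁ m₂ hm₂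
  obtain ⟨l₁, hl₁, rfl, hc₁⟩ := (hlines m₁).mp hm₁.1
  obtain ⟨l₂, hl₂, rfl, hc₂⟩ := (hlines m₂).mp hm₂.1
  have key : ∀ l (hl : M.IsLine l), g ∈ l ∩ S → 3 ≤ ((l ∩ S) ∩ X).ncard →
      l ∈ {l | M.IsLine l ∧ g ∈ l ∧ 3 ≤ (l ∩ X).ncard} := by
    intro l hl hg hcard
    refine ⟨hl, hg.1, le_trans hcard (Set.ncard_le_ncard ?_ (hfin.subset ?_))⟩
    · intro z hz; exact ⟨hz.1.1, hz.2⟩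
    · exact Set.inter_subset_left.trans (h2 l hl).1
  have e12 : l₁ = l₂ := hgood (key l₁ hl₁ hm₁.2.1 hm₁.2.2) (key l₂ hl₂ hm₂.2.1 hm₂.2.2)
  rw [e12]

/-- A presented matroid with nonempty ground set loses a point under `Sstep`. -/
lemma pres_nilpotent (hP : Pres M) : M.Nilpotent := by
  obtain ⟨n, hn⟩ : ∃ n, M.E.ncard ≤ n := ⟨M.E.ncard, le_rfl⟩
  induction n generalizing M with
  | zero =>
    refine ⟨0, ?_⟩
    have := (Set.ncard_eq_zero hP.1).mp (Nat.le_zero.mp hn)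
    simpa using this
  | succ n ih =>
    by_cases hE : M.E = ∅
    · exact ⟨0, hE⟩
    obtain ⟨hfin, h2, h3, h4, h5⟩ := hP
    obtain ⟨g, hgE, hgood⟩ := h5 M.E subset_rfl (Set.nonempty_iff_ne_empty.mpr hE)
    have hmem : ∀ l, M.IsLine l ∧ g ∈ l → l ∈ {l | M.IsLine l ∧ g ∈ l ∧ 3 ≤ (l ∩ M.E).ncard} := by
      intro l hl
      refine ⟨hl.1, hl.2, ?_⟩
      rw [Set.inter_eq_self_of_subset_left (h2 _ hl.1).1]
      exact (h2 _ hl.1).2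
    have hdeg : M.degree g ≤ 1 :=
      subsingleton_ncard_le_one (fun l₁ hl₁ l₂ hl₂ => hgood (hmem _ hl₁) (hmem _ hl₂))
    have hgS : g ∉ M.Sstep.E := by
      rintro ⟨-, -, hdeg2⟩
      omega
    have hsub : M.Sstep.E ⊂ M.E := by
      refine ⟨Set.inter_subset_left, fun hcon => hgS (hcon hgE)⟩
    have hlt : M.Sstep.E.ncard < M.E.ncard := Set.ncard_lt_ncard hsub hfin
    obtain ⟨k, hk⟩ := ih (pres_sstep ⟨hfin, h2, h3, h4, h5⟩) (by omega)
    exact ⟨k + 1, by rwa [Function.iterate_succ_apply]⟩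
lemma pres_parts {L : Set (Set ℕ)} (hfin : M.E.Finite)
    (h2 : ∀ l ∈ L, l ⊆ M.E ∧ 3 ≤ l.ncard)
    (h3 : ∀ l ∈ L, ∀ l' ∈ L, l ≠ l' → (l ∩ l').Subsingleton)
    (h4 : ∀ I, M.Indep I ↔ I ⊆ M.E ∧ I.ncard ≤ 3 ∧ (I.ncard = 3 → ¬∃ l ∈ L, I ⊆ l)) :
    (∀ l, M.IsLine l ↔ l ∈ L) ∧
    (∀ l, M.IsLine l → l ⊆ M.E ∧ 3 ≤ l.ncard) ∧
    (∀ l l', M.IsLine l → M.IsLine l' → l ≠ l' → (l ∩ l').Subsingleton) ∧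
    (∀ I, M.Indep I ↔ I ⊆ M.E ∧ I.ncard ≤ 3 ∧
      (I.ncard = 3 → ¬∃ l, M.IsLine l ∧ I ⊆ l)) := by
  have hlines := lines_eq hfin h2 h3 h4
  refine ⟨hlines, fun l hl => h2 l ((hlines l).mp hl),
    fun l l' hl hl' => h3 l ((hlines l).mp hl) l' ((hlines l').mp hl'), fun I => ?_⟩
  rw [h4 I]
  refine and_congr_right fun _ => and_congr_right fun _ => imp_congr_right fun _ =>
    not_congr ⟨fun ⟨l, hl, h⟩ => ⟨l, (hlines l).mpr hl, h⟩,
      fun ⟨l, hl, h⟩ => ⟨l, (hlines l).mp hl, h⟩⟩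

lemma goodAt_of {L : Set (Set ℕ)} (hlines : ∀ l, M.IsLine l ↔ l ∈ L) {X : Set ℕ} {g : ℕ}
    (h : {l | l ∈ L ∧ g ∈ l ∧ 3 ≤ (l ∩ X).ncard}.Subsingleton) : GoodAt M X g :=
  fun _ h₁ _ h₂ => h ⟨(hlines _).mp h₁.1, h₁.2⟩ ⟨(hlines _).mp h₂.1, h₂.2⟩

/-- A line configuration satisfies the strong invariant. -/
lemma presS_line {N : PLM ℕ} (hN : N.IsLineConfig) : PresS N := by
  obtain ⟨hfin, hcard, hI⟩ := hN
  have h2 : ∀ l ∈ ({N.E} : Set (Set ℕ)), l ⊆ N.E ∧ 3 ≤ l.ncard := by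
    rintro l rfl; exact ⟨subset_rfl, hcard⟩
  have h3 : ∀ l ∈ ({N.E} : Set (Set ℕ)), ∀ l' ∈ ({N.E} : Set (Set ℕ)),
      l ≠ l' → (l ∩ l').Subsingleton := by
    rintro l rfl l' rfl h; exact absurd rfl h
  have h4 : ∀ I, N.Indep I ↔ I ⊆ N.E ∧ I.ncard ≤ 3 ∧
      (I.ncard = 3 → ¬∃ l ∈ ({N.E} : Set (Set ℕ)), I ⊆ l) := by
    intro I
    rw [hI I]
    constructor
    · rintro ⟨hIE, hc⟩
      exact ⟨hIE, by omega, fun h3c => absurd h3c (by omega)⟩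
    · rintro ⟨hIE, hc3, hcl⟩
      refine ⟨hIE, ?_⟩
      rcases Nat.lt_or_ge I.ncard 3 with h | h
      · omega
      · exact absurd ⟨N.E, rfl, hIE⟩ (hcl (by omega))
  obtain ⟨hlines, p2, p3, p4⟩ := pres_parts hfin h2 h3 h4
  have hgood : ∀ (X : Set ℕ) (g : ℕ), GoodAt N X g := by
    intro X g
    refine goodAt_of hlines ?_
    rintro l₁ ⟨h₁, -⟩ l₂ ⟨h₂, -⟩
    simp only [Set.mem_singleton_iff] at h₁ h₂
    rw [h₁, h₂]
  refine ⟨⟨hfin, p2, p3, p4, fun X hX hXne => ⟨hXne.choose, hXne.choose_spec, hgood X _⟩⟩,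
    fun X hX hXnt => ?_⟩
  obtain ⟨a, ha, b, hb, hab⟩ := hXnt
  exact ⟨a, ha, b, hb, hab, hgood X a, hgood X b⟩
/-- In a finite pre-matroid, every dependent 3-set with all such structure extends to a line. -/
lemma exists_line_of_dep3 (hfinE : M.E.Finite) {I : Set ℕ}
    (hIE : I ⊆ M.E) (h3 : I.ncard = 3) (hdep : ¬ M.Indep I) :
    ∃ l, M.IsLine l ∧ I ⊆ l := by
  have hLPI : M.LinePre I := by
    refine ⟨hIE, hdep, fun t ht ht3 => ?_⟩
    have : t = I := Set.eq_of_subset_of_ncard_le ht (by omega) (hfinE.subset hIE)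
    rwa [this]
  set S : Set (Set ℕ) := {l | M.LinePre l ∧ I ⊆ l} with hS
  have hSfin : S.Finite := hfinE.finite_subsets.subset fun l hl => hl.1.1
  obtain ⟨a, haS, hmax⟩ := Set.Finite.exists_maximalFor id S hSfin ⟨I, hLPI, subset_rfl⟩
  exact ⟨a, ⟨haS.1, fun l' hl' hsub' =>
    Set.Subset.antisymm (hmax ⟨hl', haS.2.trans hsub'⟩ hsub') hsub'⟩, haS.2⟩

/-- Independence characterization for any finite simple rank ≤ 3 matroid. -/
lemma indep_char_matroid (hm : M.IsMatroid) (hs : M.Simple) (hr : M.RankLE3) :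
    ∀ I, M.Indep I ↔ I ⊆ M.E ∧ I.ncard ≤ 3 ∧
      (I.ncard = 3 → ¬∃ l, M.IsLine l ∧ I ⊆ l) := by
  intro I
  constructor
  · intro h
    exact ⟨hm.2.2.1 I h, hr I h, fun h3 ⟨l, hl, hIl⟩ => hl.1.2.2 I hIl h3 h⟩
  · rintro ⟨hIE, hc3, hcl⟩
    by_cases h3 : I.ncard = 3
    · by_contra hdep
      exact hcl h3 (exists_line_of_dep3 hm.1 hIE h3 hdep)
    · exact hs I hIE (by omega)

lemma fin_add_two_ne {n : ℕ} (k : Fin (n + 3)) : k + 1 + 1 ≠ k := by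
  intro h
  have h2 : (1 + 1 : Fin (n + 3)) = 0 := by
    have : k = k + (1 + 1) := by rw [← add_assoc]; exact h.symm
    exact left_eq_add.mp this
  have hv := congrArg Fin.val h2
  rw [Fin.val_add, Fin.val_one, Fin.val_zero, Nat.mod_eq_of_lt (by omega)] at hv
  omega

/-- A cycle satisfies the strong invariant. -/
lemma presS_cycle {N : PLM ℕ} (hN : N.IsCycle) : PresS N := by
  obtain ⟨hmat, hsimp, hrank, m, p, l, hpinj, hlinj, hpE, hlchar, hpt, hother⟩ := hN
  have hfin : N.E.Finite := hmat.1
  have h4 := indep_char_matroid hmat hsimp hrank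
  have hlineL : ∀ i, N.IsLine (l i) := fun i => (hlchar (l i)).mpr ⟨i, rfl⟩
  have hlE : ∀ i, l i ⊆ N.E := fun i => (hlineL i).1.1
  have p2 : ∀ L, N.IsLine L → L ⊆ N.E ∧ 3 ≤ L.ncard := by
    intro L hL
    refine ⟨hL.1.1, ?_⟩
    by_contra hc
    push_neg at hc
    exact hL.1.2.1 (hsimp L hL.1.1 (by omega))
  have F2 : ∀ j i, p j ∈ l i → i = j ∨ i = j + 1 := by
    intro j i hmem
    have hmem' : l i ∈ {L | N.IsLine L ∧ p j ∈ L} := ⟨hlineL i, hmem⟩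
    rw [hpt j] at hmem'
    rcases hmem' with h | h
    · exact Or.inl (hlinj h)
    · exact Or.inr (hlinj h)
  have hsing : ∀ z ∈ N.E, (∀ i, z ≠ p i) → {L | N.IsLine L ∧ z ∈ L}.Subsingleton := by
    intro z hzE hznp
    obtain ⟨L0, hL0⟩ := Set.ncard_eq_one.mp (hother z hzE hznp)
    rw [hL0]
    exact Set.subsingleton_singleton
  have F3 : ∀ L L', N.IsLine L → N.IsLine L' → L ≠ L' → (L ∩ L').Subsingleton := by
    intro L L' h1 h2 hne x hx y hy
    by_contra hxy
    obtain ⟨i, rfl⟩ := (hlchar L).mp h1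
    obtain ⟨j, rfl⟩ := (hlchar L').mp h2
    have hij : i ≠ j := fun h => hne (by rw [h])
    have key : ∀ z ∈ l i ∩ l j, ∃ k, z = p k ∧ ((k = i ∧ k + 1 = j) ∨ (k = j ∧ k + 1 = i)) := by
      intro z hz
      by_cases hzp : ∃ k, z = p k
      · obtain ⟨k, rfl⟩ := hzp
        refine ⟨k, rfl, ?_⟩
        rcases F2 k i hz.1 with h | h <;> rcases F2 k j hz.2 with h' | h'
        · exact absurd (h.trans h'.symm) hij
        · exact Or.inl ⟨h.symm, h'.symm⟩
        · exact Or.inr ⟨h'.symm, h.symm⟩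
        · exact absurd (h.trans h'.symm) hij
      · push_neg at hzp
        have hz1 : l i ∈ {L | N.IsLine L ∧ z ∈ L} := ⟨hlineL i, hz.1⟩
        have hz2 : l j ∈ {L | N.IsLine L ∧ z ∈ L} := ⟨hlineL j, hz.2⟩
        exact absurd (hlinj (hsing z (hlE i hz.1) hzp hz1 hz2)) hij
    obtain ⟨k, rfl, hk⟩ := key x hx
    obtain ⟨k', hy', hk'⟩ := key y hy
    have hkk' : k ≠ k' := fun h => hxy (by rw [hy', h])
    rcases hk with ⟨e1, e2⟩ | ⟨e1, e2⟩ <;> rcases hk' with ⟨f1, f2⟩ | ⟨f1, f2⟩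
    · exact hkk' (e1.trans f1.symm)
    · exact fin_add_two_ne k (by rw [e2, ← f1, f2, e1])
    · exact fin_add_two_ne k (by rw [e2, ← f1, f2, e1])
    · exact hkk' (e1.trans f1.symm)
  have fatContains : ∀ L (X : Set ℕ), N.IsLine L → 3 ≤ (L ∩ X).ncard →
      ∃ z ∈ L ∩ X, ∀ i, z ≠ p i := by
    intro L X hL hfat
    by_contra hno
    push_neg at hno
    obtain ⟨i, rfl⟩ := (hlchar L).mp hL
    have hsub : l i ∩ X ⊆ {p i, p (i - 1)} := by
      intro z hz
      obtain ⟨jj, rfl⟩ := hno z hz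
      rcases F2 jj i hz.1 with rfl | hji
      · exact Or.inl rfl
      · right
        have : jj = i - 1 := eq_sub_of_add_eq hji.symm
        rw [this]
        exact rfl
    have hcc := Set.ncard_le_ncard hsub (Set.toFinite _)
    have hcc2 := ncard_pair_le (p i) (p (i - 1))
    omega
  have goodA : ∀ (X : Set ℕ) (a : ℕ), a ∈ N.E → (∀ i, a ≠ p i) → GoodAt N X a := by
    intro X a haE hanp L1 h1 L2 h2
    exact hsing a haE hanp ⟨h1.1, h1.2.1⟩ ⟨h2.1, h2.2.1⟩
  have goodNoA : ∀ X : Set ℕ, (∀ z ∈ X, ∃ i, z = p i) → ∀ g, GoodAt N X g := by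
    intro X hX g L1 h1 L2 h2
    exfalso
    obtain ⟨z, hz, hznp⟩ := fatContains L1 X h1.1 h1.2.2
    obtain ⟨i, hi⟩ := hX z hz.2
    exact hznp i hi
  have goodVia : ∀ (X : Set ℕ) (a : ℕ), a ∈ N.E → (∀ i, a ≠ p i) →
      (∀ z ∈ X, (∀ i, z ≠ p i) → z = a) → ∀ g, GoodAt N X g := by
    intro X a haE hanp huniq g L1 h1 L2 h2
    obtain ⟨z1, hz1, hz1np⟩ := fatContains L1 X h1.1 h1.2.2
    obtain ⟨z2, hz2, hz2np⟩ := fatContains L2 X h2.1 h2.2.2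
    have e1 : a ∈ L1 := huniq z1 hz1.2 hz1np ▸ hz1.1
    have e2 : a ∈ L2 := huniq z2 hz2.2 hz2np ▸ hz2.1
    exact hsing a haE hanp ⟨h1.1, e1⟩ ⟨h2.1, e2⟩
  constructor
  · refine ⟨hfin, p2, F3, h4, ?_⟩
    intro X hX hXne
    by_cases hA : ∃ a ∈ X, ∀ i, a ≠ p i
    · obtain ⟨a, haX, hanp⟩ := hA
      exact ⟨a, haX, goodA X a (hX haX) hanp⟩
    · push_neg at hA
      exact ⟨hXne.choose, hXne.choose_spec, goodNoA X hA _⟩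
  · intro X hX hXnt
    by_cases hA : ∃ a ∈ X, ∀ i, a ≠ p i
    · obtain ⟨a, haX, hanp⟩ := hA
      by_cases hA2 : ∃ b ∈ X, (∀ i, b ≠ p i) ∧ b ≠ a
      · obtain ⟨b, hbX, hbnp, hba⟩ := hA2
        exact ⟨a, haX, b, hbX, hba.symm, goodA X a (hX haX) hanp, goodA X b (hX hbX) hbnp⟩
      · push_neg at hA2
        obtain ⟨b, hbX, hba⟩ := hXnt.exists_ne a
        refine ⟨a, haX, b, hbX, hba.symm, goodA X a (hX haX) hanp, ?_⟩
        exact goodVia X a (hX haX) hanp (fun z hz hznp => hA2 z hz hznp) b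
    · push_neg at hA
      obtain ⟨x, hx, y, hy, hxy⟩ := hXnt
      exact ⟨x, hx, y, hy, hxy, goodNoA X hA x, goodNoA X hA y⟩
lemma mem_relabel {l : Set ℕ} {x r Q : ℕ} :
    x ∈ PLM.relabelLine l r Q ↔ (x ∈ l ∧ x ≠ r) ∨ (x = Q ∧ r ∈ l) := Iff.rfl

lemma relabel_ncard {l : Set ℕ} {r Q : ℕ} (hfin : l.Finite) (hQ : Q ∉ l) :
    (PLM.relabelLine l r Q).ncard = l.ncard := by
  by_cases hr : r ∈ l
  · have he : PLM.relabelLine l r Q = insert Q (l \ {r}) := by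
      ext x
      simp only [mem_relabel, Set.mem_insert_iff, Set.mem_diff, Set.mem_singleton_iff]
      constructor
      · rintro (⟨h1, h2⟩ | ⟨h1, -⟩)
        · exact Or.inr ⟨h1, h2⟩
        · exact Or.inl h1
      · rintro (rfl | ⟨h1, h2⟩)
        · exact Or.inr ⟨rfl, hr⟩
        · exact Or.inl ⟨h1, h2⟩
    rw [he, Set.ncard_insert_of_notMem (fun hc => hQ hc.1) ((hfin.diff)),
      Set.ncard_diff_singleton_add_one hr hfin]
  · have he : PLM.relabelLine l r Q = l := by
      ext x
      simp only [mem_relabel]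
      constructor
      · rintro (⟨h1, -⟩ | ⟨-, h1⟩)
        · exact h1
        · exact absurd h1 hr
      · intro hx
        exact Or.inl ⟨hx, fun hc => hr (hc ▸ hx)⟩
    rw [he]

lemma relabel_inj {l l' : Set ℕ} {r Q : ℕ} (hQl : Q ∉ l) (hQl' : Q ∉ l') (hQr : Q ≠ r)
    (he : PLM.relabelLine l r Q = PLM.relabelLine l' r Q) : l = l' := by
  have key : ∀ a b : Set ℕ, Q ∉ a → Q ∉ b →
      PLM.relabelLine a r Q = PLM.relabelLine b r Q → a ⊆ b := by
    intro a b hQa hQb hab x hx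
    by_cases hxr : x = r
    · have : Q ∈ PLM.relabelLine a r Q := Or.inr ⟨rfl, hxr ▸ hx⟩
      rw [hab] at this
      rcases this with ⟨h1, -⟩ | ⟨-, h1⟩
      · exact absurd h1 hQb
      · exact hxr ▸ h1
    · have : x ∈ PLM.relabelLine a r Q := Or.inl ⟨hx, hxr⟩
      rw [hab] at this
      rcases this with ⟨h1, -⟩ | ⟨h1, -⟩
      · exact h1
      · exact absurd (h1 ▸ hx) hQa
  exact Set.Subset.antisymm (key l l' hQl hQl' he) (key l' l hQl' hQl he.symm)

lemma glue_symm {M N G : PLM ℕ} {p q P : ℕ} (h : PLM.IsFreeGluing M N G p q P) :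
    PLM.IsFreeGluing N M G q p P := by
  obtain ⟨h1, h2, h3, h4, h5, h6, h7⟩ := h
  refine ⟨h2, h1, h3.symm, h5, h4, by rw [h6, Set.union_comm], fun I => (h7 I).trans ?_⟩
  refine and_congr_right fun _ => and_congr_right fun _ => imp_congr_right fun _ =>
    not_congr ⟨fun ⟨l', hd, hs⟩ => ⟨l', hd.symm, hs⟩, fun ⟨l', hd, hs⟩ => ⟨l', hd.symm, hs⟩⟩

/-- The lines of a free gluing. -/
def glueLines (M N : PLM ℕ) (p q P : ℕ) : Set (Set ℕ) :=
  {l' | (∃ l0, M.IsLine l0 ∧ l' = PLM.relabelLine l0 p P) ∨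
    (∃ l0, N.IsLine l0 ∧ l' = PLM.relabelLine l0 q P)}

lemma glue_parts {M N G : PLM ℕ} {p q P : ℕ} (h : PLM.IsFreeGluing M N G p q P)
    (hM : PresS M) (hN : PresS N) :
    (∀ l, G.IsLine l ↔ l ∈ glueLines M N p q P) ∧
    (∀ l, G.IsLine l → l ⊆ G.E ∧ 3 ≤ l.ncard) ∧
    (∀ l l', G.IsLine l → G.IsLine l' → l ≠ l' → (l ∩ l').Subsingleton) ∧
    (∀ I, G.Indep I ↔ I ⊆ G.E ∧ I.ncard ≤ 3 ∧
      (I.ncard = 3 → ¬∃ l, G.IsLine l ∧ I ⊆ l)) := by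
  obtain ⟨hpM, hqN, hdisj, hPM, hPN, hGE, hGI⟩ := h
  obtain ⟨⟨hMfin, hM2, hM3, hM4, hM5⟩, hM5'⟩ := hM
  obtain ⟨⟨hNfin, hN2, hN3, hN4, hN5⟩, hN5'⟩ := hN
  have hfinG : G.E.Finite := by
    rw [hGE]
    exact (((hMfin.diff).union (hNfin.diff)).insert _)
  have hPnotMl : ∀ l0, M.IsLine l0 → P ∉ l0 := fun l0 hl0 hc => hPM ((hM2 l0 hl0).1 hc)
  have hPnotNl : ∀ l0, N.IsLine l0 → P ∉ l0 := fun l0 hl0 hc => hPN ((hN2 l0 hl0).1 hc)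
  have h2G : ∀ l ∈ glueLines M N p q P, l ⊆ G.E ∧ 3 ≤ l.ncard := by
    rintro l' (⟨l0, hl0, rfl⟩ | ⟨l0, hl0, rfl⟩)
    · constructor
      · rintro x (⟨hx, hxp⟩ | ⟨rfl, -⟩)
        · rw [hGE]; exact Or.inr (Or.inl ⟨(hM2 l0 hl0).1 hx, hxp⟩)
        · rw [hGE]; exact Or.inl rfl
      · rw [relabel_ncard (hMfin.subset (hM2 l0 hl0).1) (hPnotMl l0 hl0)]
        exact (hM2 l0 hl0).2
    · constructor
      · rintro x (⟨hx, hxq⟩ | ⟨rfl, -⟩)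
        · rw [hGE]; exact Or.inr (Or.inr ⟨(hN2 l0 hl0).1 hx, hxq⟩)
        · rw [hGE]; exact Or.inl rfl
      · rw [relabel_ncard (hNfin.subset (hN2 l0 hl0).1) (hPnotNl l0 hl0)]
        exact (hN2 l0 hl0).2
  have hsame : ∀ (A : Set ℕ) (r : ℕ), P ∉ A → ∀ l0 l1 : Set ℕ, l0 ⊆ A → l1 ⊆ A →
      (l0 ∩ l1).Subsingleton →
      (PLM.relabelLine l0 r P ∩ PLM.relabelLine l1 r P).Subsingleton := by
    intro A r hPA l0 l1 h0 h1 hss x hx y hy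
    rcases hx with ⟨hx0, hx1⟩
    rcases hy with ⟨hy0, hy1⟩
    by_cases hxP : x = P <;> by_cases hyP : y = P
    · rw [hxP, hyP]
    · exfalso
      rcases hx0 with ⟨hc, -⟩ | ⟨-, hr0⟩
      · exact hPA (h0 (hxP ▸ hc))
      rcases hx1 with ⟨hc, -⟩ | ⟨-, hr1⟩
      · exact hPA (h1 (hxP ▸ hc))
      rcases hy0 with ⟨hc0, hyr⟩ | ⟨hc, -⟩
      · rcases hy1 with ⟨hc1, -⟩ | ⟨hc, -⟩
        · exact hyr (hss ⟨hc0, hc1⟩ ⟨hr0, hr1⟩)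
        · exact hyP hc
      · exact hyP hc
    · exfalso
      rcases hy0 with ⟨hc, -⟩ | ⟨-, hr0⟩
      · exact hPA (h0 (hyP ▸ hc))
      rcases hy1 with ⟨hc, -⟩ | ⟨-, hr1⟩
      · exact hPA (h1 (hyP ▸ hc))
      rcases hx0 with ⟨hc0, hxr⟩ | ⟨hc, -⟩
      · rcases hx1 with ⟨hc1, -⟩ | ⟨hc, -⟩
        · exact hxr (hss ⟨hc0, hc1⟩ ⟨hr0, hr1⟩)
        · exact hxP hc
      · exact hxP hc
    · rcases hx0 with ⟨hc0, hxr⟩ | ⟨hc, -⟩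
      · rcases hx1 with ⟨hc1, -⟩ | ⟨hc, -⟩
        · rcases hy0 with ⟨hd0, hyr⟩ | ⟨hd, -⟩
          · rcases hy1 with ⟨hd1, -⟩ | ⟨hd, -⟩
            · exact hss ⟨hc0, hc1⟩ ⟨hd0, hd1⟩
            · exact absurd hd hyP
          · exact absurd hd hyP
        · exact absurd hc hxP
      · exact absurd hc hxP
  have h3G : ∀ l ∈ glueLines M N p q P, ∀ l' ∈ glueLines M N p q P, l ≠ l' →
      (l ∩ l').Subsingleton := by
    have hcross : ∀ l0 l1 : Set ℕ, l0 ⊆ M.E → l1 ⊆ N.E →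
        (PLM.relabelLine l0 p P ∩ PLM.relabelLine l1 q P).Subsingleton := by
      intro l0 l1 h0 h1 x hx y hy
      have hxP : x = P := by
        rcases hx.1 with ⟨hc, -⟩ | ⟨hc, -⟩
        · rcases hx.2 with ⟨hd, -⟩ | ⟨hd, -⟩
          · exact absurd (Set.not_disjoint_iff.mpr ⟨x, h0 hc, h1 hd⟩) (fun c => c hdisj)
          · exact hd
        · exact hc
      have hyP : y = P := by
        rcases hy.1 with ⟨hc, -⟩ | ⟨hc, -⟩
        · rcases hy.2 with ⟨hd, -⟩ | ⟨hd, -⟩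
          · exact absurd (Set.not_disjoint_iff.mpr ⟨y, h0 hc, h1 hd⟩) (fun c => c hdisj)
          · exact hd
        · exact hc
      rw [hxP, hyP]
    rintro l' (⟨l0, hl0, rfl⟩ | ⟨l0, hl0, rfl⟩) l'' (⟨l1, hl1, rfl⟩ | ⟨l1, hl1, rfl⟩) hne
    · have hne' : l0 ≠ l1 := fun hc => hne (by rw [hc])
      exact hsame M.E p hPM l0 l1 (hM2 l0 hl0).1 (hM2 l1 hl1).1 (hM3 l0 l1 hl0 hl1 hne')
    · exact hcross l0 l1 (hM2 l0 hl0).1 (hN2 l1 hl1).1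
    · intro x hx y hy
      exact hcross l1 l0 (hM2 l1 hl1).1 (hN2 l0 hl0).1 ⟨hx.2, hx.1⟩ ⟨hy.2, hy.1⟩
    · have hne' : l0 ≠ l1 := fun hc => hne (by rw [hc])
      exact hsame N.E q hPN l0 l1 (hN2 l0 hl0).1 (hN2 l1 hl1).1 (hN3 l0 l1 hl0 hl1 hne')
  have h4G : ∀ I, G.Indep I ↔ I ⊆ G.E ∧ I.ncard ≤ 3 ∧
      (I.ncard = 3 → ¬∃ l ∈ glueLines M N p q P, I ⊆ l) := fun I => hGI I
  exact pres_parts hfinG h2G h3G h4G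
lemma glue_side_goods {M N G : PLM ℕ} {p q P : ℕ} (h : PLM.IsFreeGluing M N G p q P)
    (hM : PresS M) (hN : PresS N) {X : Set ℕ} (hXG : X ⊆ G.E) (hXN : (X ∩ N.E).Nonempty) :
    (∃ g ∈ X ∩ N.E, GoodAt G X g) ∧
    (X ∩ M.E = ∅ → X.Nontrivial →
      ∃ g₁ ∈ X, ∃ g₂ ∈ X, g₁ ≠ g₂ ∧ GoodAt G X g₁ ∧ GoodAt G X g₂) := by
  obtain ⟨hlinesG, -, -, -⟩ := glue_parts h hM hN
  obtain ⟨hpM, hqN, hdisj, hPM, hPN, hGE, hGI⟩ := h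
  obtain ⟨⟨hMfin, hM2, hM3, hM4, hM5⟩, hM5'⟩ := hM
  obtain ⟨⟨hNfin, hN2, hN3, hN4, hN5⟩, hN5'⟩ := hN
  have hqG : q ∉ G.E := by
    rw [hGE]
    rintro (rfl | ⟨hc, -⟩ | ⟨-, hc⟩)
    · exact hPN hqN
    · exact absurd (Set.not_disjoint_iff.mpr ⟨q, hc, hqN⟩) (fun c => c hdisj)
    · exact hc rfl
  have hqX : q ∉ X := fun hc => hqG (hXG hc)
  set X' : Set ℕ := (X ∩ N.E) ∪ {y | y = q ∧ P ∈ X} with hX'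
  have hX'N : X' ⊆ N.E := by
    rintro x (⟨-, hx⟩ | ⟨rfl, -⟩)
    · exact hx
    · exact hqN
  -- fatness transfer along the relabelling
  have fatT : ∀ l0, l0 ⊆ N.E → 3 ≤ (PLM.relabelLine l0 q P ∩ X).ncard →
      3 ≤ (l0 ∩ X').ncard := by
    intro l0 hl0E hfat
    have hmap : ∀ z ∈ PLM.relabelLine l0 q P ∩ X,
        (if z = P then q else z) ∈ l0 ∩ X' := by
      intro z hz
      by_cases hzP : z = P
      · rw [if_pos hzP]
        have hq0 : q ∈ l0 := by
          rcases hz.1 with ⟨hc, -⟩ | ⟨-, hc⟩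
          · exact absurd (hl0E (hzP ▸ hc)) hPN
          · exact hc
        exact ⟨hq0, Or.inr ⟨rfl, hzP ▸ hz.2⟩⟩
      · rw [if_neg hzP]
        rcases hz.1 with ⟨hc, -⟩ | ⟨hc, -⟩
        · exact ⟨hc, Or.inl ⟨hz.2, hl0E hc⟩⟩
        · exact absurd hc hzP
    have hinj : Set.InjOn (fun z => if z = P then q else z)
        (PLM.relabelLine l0 q P ∩ X) := by
      intro a ha b hb hab
      dsimp only at hab
      by_cases haP : a = P <;> by_cases hbP : b = P
      · rw [haP, hbP]
      · exfalso
        rw [if_pos haP, if_neg hbP] at hab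
        rcases hb.1 with ⟨-, hc⟩ | ⟨hc, -⟩
        · exact hc hab.symm
        · exact hbP hc
      · exfalso
        rw [if_neg haP, if_pos hbP] at hab
        rcases ha.1 with ⟨-, hc⟩ | ⟨hc, -⟩
        · exact hc hab
        · exact haP hc
      · rwa [if_neg haP, if_neg hbP] at hab
    calc 3 ≤ (PLM.relabelLine l0 q P ∩ X).ncard := hfat
      _ ≤ (l0 ∩ X').ncard := Set.ncard_le_ncard_of_injOn _ hmap hinj
          ((hNfin.subset hl0E).subset Set.inter_subset_left)
  -- a G-line through a point of N.E ∖ {q} comes from N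
  have hNline : ∀ (g : ℕ), g ∈ N.E → ∀ L, G.IsLine L → g ∈ L →
      ∃ l0, N.IsLine l0 ∧ L = PLM.relabelLine l0 q P ∧ g ∈ l0 ∧ g ≠ q := by
    intro g hgN L hL hgL
    have hgP : g ≠ P := fun hc => hPN (hc ▸ hgN)
    rcases (hlinesG L).mp hL with ⟨l0, hl0, rfl⟩ | ⟨l0, hl0, rfl⟩
    · exfalso
      rcases hgL with ⟨hc, -⟩ | ⟨hc, -⟩
      · exact absurd (Set.not_disjoint_iff.mpr ⟨g, (hM2 l0 hl0).1 hc, hgN⟩) (fun c => c hdisj)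
      · exact hgP hc
    · rcases hgL with ⟨hc, hcq⟩ | ⟨hc, -⟩
      · exact ⟨l0, hl0, rfl, hc, hcq⟩
      · exact absurd hc hgP
  have T1 : ∀ g ∈ X ∩ N.E, GoodAt N X' g → GoodAt G X g := by
    intro g hg hgood L1 hL1 L2 hL2
    obtain ⟨l1, hl1, rfl, hgl1, -⟩ := hNline g hg.2 L1 hL1.1 hL1.2.1
    obtain ⟨l2, hl2, rfl, hgl2, -⟩ := hNline g hg.2 L2 hL2.1 hL2.2.1
    have e := hgood ⟨hl1, hgl1, fatT l1 (hN2 l1 hl1).1 hL1.2.2⟩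
      ⟨hl2, hgl2, fatT l2 (hN2 l2 hl2).1 hL2.2.2⟩
    rw [e]
  have T2 : P ∈ X → X ∩ M.E = ∅ → GoodAt N X' q → GoodAt G X P := by
    intro hPX hXM hgood L1 hL1 L2 hL2
    have hrep : ∀ L, G.IsLine L → P ∈ L → 3 ≤ (L ∩ X).ncard →
        ∃ l0, N.IsLine l0 ∧ L = PLM.relabelLine l0 q P ∧ q ∈ l0 := by
      intro L hL hPL hfat
      rcases (hlinesG L).mp hL with ⟨l0, hl0, rfl⟩ | ⟨l0, hl0, rfl⟩
      · exfalso
        have hsub : PLM.relabelLine l0 p P ∩ X ⊆ {P} := by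
          rintro z ⟨hz1, hz2⟩
          rcases hz1 with ⟨hc, -⟩ | ⟨hc, -⟩
          · exact absurd (Set.eq_empty_iff_forall_notMem.mp hXM z ⟨hz2, (hM2 l0 hl0).1 hc⟩)
              not_false
          · exact hc
        have := Set.ncard_le_ncard hsub (Set.finite_singleton P)
        rw [Set.ncard_singleton] at this
        omega
      · refine ⟨l0, hl0, rfl, ?_⟩
        rcases hPL with ⟨hc, -⟩ | ⟨-, hc⟩
        · exact absurd ((hN2 l0 hl0).1 hc) hPN
        · exact hc
    obtain ⟨l1, hl1, rfl, hql1⟩ := hrep L1 hL1.1 hL1.2.1 hL1.2.2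
    obtain ⟨l2, hl2, rfl, hql2⟩ := hrep L2 hL2.1 hL2.2.1 hL2.2.2
    have e := hgood ⟨hl1, hql1, fatT l1 (hN2 l1 hl1).1 hL1.2.2⟩
      ⟨hl2, hql2, fatT l2 (hN2 l2 hl2).1 hL2.2.2⟩
    rw [e]
  have hmemX' : ∀ g, g ∈ X' → g ≠ q → g ∈ X ∩ N.E := by
    rintro g (hg | ⟨rfl, -⟩) hgq
    · exact hg
    · exact absurd rfl hgq
  constructor
  · by_cases hnt : X'.Nontrivial
    · obtain ⟨g₁, hg₁, g₂, hg₂, hne, hgood₁, hgood₂⟩ := hN5' X' hX'N hnt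
      by_cases hg₁q : g₁ = q
      · have hg₂q : g₂ ≠ q := fun hc => hne (hg₁q ▸ hc ▸ rfl)
        have hg₂' := hmemX' g₂ hg₂ hg₂q
        exact ⟨g₂, hg₂', T1 g₂ hg₂' hgood₂⟩
      · have hg₁' := hmemX' g₁ hg₁ hg₁q
        exact ⟨g₁, hg₁', T1 g₁ hg₁' hgood₁⟩
    · have hss : X'.Subsingleton := Set.not_nontrivial_iff.mp hnt
      obtain ⟨w, hw⟩ := hXN
      obtain ⟨g, hgX', hgood⟩ := hN5 X' hX'N ⟨w, Or.inl hw⟩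
      have : g = w := hss hgX' (Or.inl hw)
      exact ⟨w, hw, T1 w hw (this ▸ hgood)⟩
  · intro hXM hXnt
    by_cases hPX : P ∈ X
    · obtain ⟨w, hw⟩ := hXN
      have hwq : w ≠ q := fun hc => hqX (hc ▸ hw.1)
      have hnt' : X'.Nontrivial := ⟨w, Or.inl hw, q, Or.inr ⟨rfl, hPX⟩, hwq⟩
      obtain ⟨g₁, hg₁, g₂, hg₂, hne, hgood₁, hgood₂⟩ := hN5' X' hX'N hnt'
      by_cases hg₁q : g₁ = q
      · have hg₂q : g₂ ≠ q := fun hc => hne (hg₁q ▸ hc ▸ rfl)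
        have hg₂' := hmemX' g₂ hg₂ hg₂q
        have hg₂P : g₂ ≠ P := fun hc => hPN (hc ▸ hg₂'.2)
        exact ⟨g₂, hg₂'.1, P, hPX, hg₂P, T1 g₂ hg₂' hgood₂,
          T2 hPX hXM (hg₁q ▸ hgood₁)⟩
      · have hg₁' := hmemX' g₁ hg₁ hg₁q
        by_cases hg₂q : g₂ = q
        · have hg₁P : g₁ ≠ P := fun hc => hPN (hc ▸ hg₁'.2)
          exact ⟨g₁, hg₁'.1, P, hPX, hg₁P, T1 g₁ hg₁' hgood₁,
            T2 hPX hXM (hg₂q ▸ hgood₂)⟩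
        · have hg₂' := hmemX' g₂ hg₂ hg₂q
          exact ⟨g₁, hg₁'.1, g₂, hg₂'.1, hne, T1 g₁ hg₁' hgood₁, T1 g₂ hg₂' hgood₂⟩
    · have hXsub : X ⊆ N.E := by
        intro x hx
        have := hXG hx
        rw [hGE] at this
        rcases this with rfl | ⟨hc, -⟩ | ⟨hc, -⟩
        · exact absurd hx hPX
        · exact absurd (Set.eq_empty_iff_forall_notMem.mp hXM x ⟨hx, hc⟩) not_false
        · exact hc
      have hX'eq : X' = X := by
        apply Set.Subset.antisymm
        · rintro x (hx | ⟨rfl, hc⟩)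
          · exact hx.1
          · exact absurd hc hPX
        · intro x hx
          exact Or.inl ⟨hx, hXsub hx⟩
      obtain ⟨g₁, hg₁, g₂, hg₂, hne, hgood₁, hgood₂⟩ := hN5' X' hX'N (hX'eq ▸ hXnt)
      rw [hX'eq] at hg₁ hg₂
      have hm₁ : g₁ ∈ X ∩ N.E := ⟨hg₁, hXsub hg₁⟩
      have hm₂ : g₂ ∈ X ∩ N.E := ⟨hg₂, hXsub hg₂⟩
      exact ⟨g₁, hg₁, g₂, hg₂, hne, T1 g₁ hm₁ hgood₁, T1 g₂ hm₂ hgood₂⟩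

/-- Free gluing preserves the strong invariant. -/
lemma presS_glue {M N G : PLM ℕ} {p q P : ℕ} (hM : PresS M) (hN : PresS N)
    (h : PLM.IsFreeGluing M N G p q P) : PresS G := by
  obtain ⟨hlinesG, p2G, p3G, p4G⟩ := glue_parts h hM hN
  have h' := glue_symm h
  have hfinG : G.E.Finite := by
    rw [h.2.2.2.2.2.1]
    exact (((hM.1.1.diff).union (hN.1.1.diff)).insert _)
  have hPonly : ∀ X : Set ℕ, X ∩ N.E = ∅ → X ∩ M.E = ∅ → X ⊆ G.E → X ⊆ {P} := by
    intro X hXN hXM hXG x hx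
    have := hXG hx
    rw [h.2.2.2.2.2.1] at this
    rcases this with rfl | ⟨hc, -⟩ | ⟨hc, -⟩
    · exact rfl
    · exact absurd (Set.eq_empty_iff_forall_notMem.mp hXM x ⟨hx, hc⟩) not_false
    · exact absurd (Set.eq_empty_iff_forall_notMem.mp hXN x ⟨hx, hc⟩) not_false
  have hPgood : ∀ X : Set ℕ, X ⊆ {P} → ∀ g, GoodAt G X g := by
    intro X hXP g L1 hL1 L2 hL2
    exfalso
    have hsub' : L1 ∩ X ⊆ {P} := fun z hz => hXP hz.2
    have hle := Set.ncard_le_ncard hsub' (Set.finite_singleton P)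
    rw [Set.ncard_singleton] at hle
    have := hL1.2.2
    omega
  constructor
  · refine ⟨hfinG, p2G, p3G, p4G, ?_⟩
    intro X hXG hXne
    by_cases h1 : (X ∩ N.E).Nonempty
    · obtain ⟨g, hg, hgood⟩ := (glue_side_goods h hM hN hXG h1).1
      exact ⟨g, hg.1, hgood⟩
    by_cases h2 : (X ∩ M.E).Nonempty
    · obtain ⟨g, hg, hgood⟩ := (glue_side_goods h' hN hM hXG h2).1
      exact ⟨g, hg.1, hgood⟩
    · refine ⟨hXne.choose, hXne.choose_spec, hPgood X ?_ _⟩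
      exact hPonly X (Set.not_nonempty_iff_eq_empty.mp h1)
        (Set.not_nonempty_iff_eq_empty.mp h2) hXG
  · intro X hXG hXnt
    by_cases h1 : (X ∩ N.E).Nonempty <;> by_cases h2 : (X ∩ M.E).Nonempty
    · obtain ⟨g₁, hg₁, hgood₁⟩ := (glue_side_goods h hM hN hXG h1).1
      obtain ⟨g₂, hg₂, hgood₂⟩ := (glue_side_goods h' hN hM hXG h2).1
      have hne : g₁ ≠ g₂ := by
        rintro rfl
        exact absurd (Set.not_disjoint_iff.mpr ⟨g₁, hg₂.2, hg₁.2⟩)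
          (fun c => c h.2.2.1)
      exact ⟨g₁, hg₁.1, g₂, hg₂.1, hne, hgood₁, hgood₂⟩
    · exact (glue_side_goods h hM hN hXG h1).2 (Set.not_nonempty_iff_eq_empty.mp h2) hXnt
    · exact (glue_side_goods h' hN hM hXG h2).2 (Set.not_nonempty_iff_eq_empty.mp h1) hXnt
    · exfalso
      obtain ⟨x, hx, y, hy, hxy⟩ := hXnt
      have hXP := hPonly X (Set.not_nonempty_iff_eq_empty.mp h1)
        (Set.not_nonempty_iff_eq_empty.mp h2) hXG
      rw [hXP hx, hXP hy] at hxy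
      exact hxy rfl
/-- Every connected cactus configuration satisfies the strong invariant. -/
lemma presS_cactus : ∀ G : PLM ℕ, PLM.IsConnectedCactus G → PresS G := by
  intro G hG
  induction hG with
  | line M h => exact presS_line h
  | cycle M h => exact presS_cycle h
  | glue M N G p q P hMc hN hglue ihM =>
    exact presS_glue ihM (hN.elim presS_line presS_cycle) hglue

lemma connStep_symm {M : PLM ℕ} : Symmetric (PLM.ConnStep M) :=
  fun _ _ ⟨C, h1, h2, h3⟩ => ⟨C, h1, h3, h2⟩

lemma comp_eq_of_mem {M : PLM ℕ} {x y : ℕ} (hy : y ∈ M.component x) :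
    M.component y = M.component x := by
  have hsymm : ∀ {a b}, Relation.ReflTransGen (PLM.ConnStep M) a b →
      Relation.ReflTransGen (PLM.ConnStep M) b a := by
    intro a b h
    induction h with
    | refl => exact Relation.ReflTransGen.refl
    | tail _ hbc ih => exact Relation.ReflTransGen.head (connStep_symm hbc) ih
  ext z
  constructor
  · intro hz
    exact ⟨hz.1, hy.2.trans hz.2⟩
  · intro hz
    exact ⟨hz.1, (hsymm hy.2).trans hz.2⟩

lemma exists_circuit {M : PLM ℕ} {I : Set ℕ} (hfin : I.Finite) (hIE : I ⊆ M.E)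
    (hdep : ¬ M.Indep I) : ∃ C, C ⊆ I ∧ M.Circuit C := by
  set S : Set (Set ℕ) := {C | C ⊆ I ∧ ¬ M.Indep C} with hS
  have hSfin : S.Finite := hfin.finite_subsets.subset fun C hC => hC.1
  obtain ⟨C, hCS, hmin⟩ := Set.Finite.exists_minimalFor id S hSfin ⟨I, subset_rfl, hdep⟩
  refine ⟨C, hCS.1, hCS.1.trans hIE, hCS.2, fun C' hC'C => ?_⟩
  by_contra hdep'
  exact hC'C.2 (hmin ⟨hC'C.subset.trans hCS.1, hdep'⟩ hC'C.subset)

/-- Every cactus configuration satisfies the invariant. -/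
lemma pres_of_cactusConfig (hM : PLM.IsCactusConfig M) : Pres M := by
  obtain ⟨hmat, hsimp, ⟨hrank, -⟩, hcomp⟩ := hM
  have hfin : M.E.Finite := hmat.1
  have hPx : ∀ x ∈ M.E, PresS (M.restrict (M.component x)) :=
    fun x hx => presS_cactus _ (hcomp x hx)
  set L : Set (Set ℕ) := {l | ∃ x ∈ M.E, (M.restrict (M.component x)).IsLine l} with hL
  have hlcompsub : ∀ x ∈ M.E, ∀ l, (M.restrict (M.component x)).IsLine l →
      l ⊆ M.component x := by
    intro x hx l hl
    exact ((hPx x hx).1.2.1 l hl).1.trans Set.inter_subset_right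
  have h2 : ∀ l ∈ L, l ⊆ M.E ∧ 3 ≤ l.ncard := by
    rintro l ⟨x, hx, hl⟩
    obtain ⟨hsub, hc⟩ := (hPx x hx).1.2.1 l hl
    exact ⟨hsub.trans Set.inter_subset_left, hc⟩
  have h3 : ∀ l ∈ L, ∀ l' ∈ L, l ≠ l' → (l ∩ l').Subsingleton := by
    rintro l ⟨x, hx, hl⟩ l' ⟨y, hy, hl'⟩ hne
    by_cases hcc : M.component x = M.component y
    · have e : M.restrict (M.component y) = M.restrict (M.component x) := by rw [hcc]
      exact (hPx x hx).1.2.2.1 l l' hl (e ▸ hl') hne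
    · intro a ha b hb
      exfalso
      have hax : a ∈ M.component x := hlcompsub x hx l hl ha.1
      have hay : a ∈ M.component y := hlcompsub y hy l' hl' ha.2
      exact hcc ((comp_eq_of_mem hax).symm.trans (comp_eq_of_mem hay))
  have h4 : ∀ I, M.Indep I ↔ I ⊆ M.E ∧ I.ncard ≤ 3 ∧ (I.ncard = 3 → ¬∃ l ∈ L, I ⊆ l) := by
    intro I
    constructor
    · intro hIndep
      refine ⟨hmat.2.2.1 I hIndep, hrank I hIndep, ?_⟩
      rintro h3c ⟨l, ⟨x, hx, hl⟩, hIl⟩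
      have hRI : (M.restrict (M.component x)).Indep I :=
        ⟨hIndep, hIl.trans (hlcompsub x hx l hl)⟩
      exact (((hPx x hx).1.2.2.2.1 I).mp hRI).2.2 h3c ⟨l, hl, hIl⟩
    · rintro ⟨hIE, hc3, hcl⟩
      by_cases h3c : I.ncard = 3
      · by_contra hdep
        obtain ⟨C, hCI, hCirc⟩ := exists_circuit (hfin.subset hIE) hIE hdep
        have hC3 : 3 ≤ C.ncard := by
          by_contra hlt
          push_neg at hlt
          exact hCirc.2.1 (hsimp C hCirc.1 (by omega))
        have hCeq : C = I :=
          Set.eq_of_subset_of_ncard_le hCI (by omega) (hfin.subset hIE)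
        obtain ⟨x, hx⟩ := Set.nonempty_of_ncard_ne_zero (s := C) (by omega)
        have hxE : x ∈ M.E := hCirc.1 hx
        have hIcomp : I ⊆ M.component x := by
          rw [← hCeq]
          exact fun y hy => ⟨hCirc.1 hy, Relation.ReflTransGen.single ⟨C, hCirc, hx, hy⟩⟩
        have hRdep : ¬ (M.restrict (M.component x)).Indep I := fun hc => hdep hc.1
        have hsubRE : I ⊆ (M.restrict (M.component x)).E := Set.subset_inter hIE hIcomp
        have : ∃ l, (M.restrict (M.component x)).IsLine l ∧ I ⊆ l := by
          by_contra hno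
          exact hRdep (((hPx x hxE).1.2.2.2.1 I).mpr ⟨hsubRE, hc3, fun _ => hno⟩)
        obtain ⟨l, hl, hIl⟩ := this
        exact hcl h3c ⟨l, ⟨x, hxE, hl⟩, hIl⟩
      · exact hsimp I hIE (by omega)
  obtain ⟨hlines, p2, p3, p4⟩ := pres_parts hfin h2 h3 h4
  refine ⟨hfin, p2, p3, p4, ?_⟩
  intro X hX hXne
  obtain ⟨x₀, hx₀⟩ := hXne
  have hx₀E : x₀ ∈ M.E := hX hx₀
  set X₀ : Set ℕ := X ∩ M.component x₀ with hX₀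
  have hX₀sub : X₀ ⊆ (M.restrict (M.component x₀)).E :=
    fun z hz => ⟨hX hz.1, hz.2⟩
  obtain ⟨g, hgX₀, hgood⟩ := (hPx x₀ hx₀E).1.2.2.2.2 X₀ hX₀sub
    ⟨x₀, hx₀, hx₀E, Relation.ReflTransGen.refl⟩
  refine ⟨g, hgX₀.1, ?_⟩
  have key : ∀ LL, M.IsLine LL ∧ g ∈ LL ∧ 3 ≤ (LL ∩ X).ncard →
      LL ∈ {l | (M.restrict (M.component x₀)).IsLine l ∧ g ∈ l ∧ 3 ≤ (l ∩ X₀).ncard} := by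
    rintro LL ⟨hLL, hgLL, hfat⟩
    obtain ⟨y, hy, hly⟩ := (hlines LL).mp hLL
    have hgy : g ∈ M.component y := hlcompsub y hy LL hly hgLL
    have hcc : M.component y = M.component x₀ :=
      (comp_eq_of_mem hgy).symm.trans (comp_eq_of_mem hgX₀.2)
    have e : M.restrict (M.component y) = M.restrict (M.component x₀) := by rw [hcc]
    refine ⟨e ▸ hly, hgLL, ?_⟩
    have hLLc : LL ⊆ M.component x₀ := hcc ▸ hlcompsub y hy LL hly
    have hsubeq : LL ∩ X ⊆ LL ∩ X₀ := fun z hz => ⟨hz.1, hz.2, hLLc hz.1⟩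
    have hfLL : (LL ∩ X₀).Finite :=
      (hfin.subset (h2 LL ⟨y, hy, hly⟩).1).subset Set.inter_subset_left
    exact le_trans hfat (Set.ncard_le_ncard hsubeq hfLL)
  intro L1 h1 L2 h2'
  exact hgood (key L1 h1) (key L2 h2')

end CactusProof

/-- Every cactus configuration is nilpotent. -/
theorem cactus_is_nilpotent (M : PLM ℕ) (hM : PLM.IsCactusConfig M) :
    M.Nilpotent := by
  exact CactusProof.pres_nilpotent (CactusProof.pres_of_cactusConfig hM)
end

section
/- Let M be a simple rank-3 matroid on [d] with d ≥ 4, let L ⊂ ℂ³ be a 2-dimensional linear subspace, let γ_1,…,γ_{d−1} be nonzero vectors in L, and let q ∈ ℂ³ \ L. Assume that (γ_1,…,γ_{d−1}) is liftable from q with respect to the restriction M|[d−1], and that the degree of the point d in M is at most 2. Then there exists a nonzero vector γ_d ∈ L such that (γ_1,…,γ_d) is liftable from q with respect to M. -/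
/-- The tuple `γ` is liftable from `q` with respect to `M`: there exist scalars `z_i`
such that the lifted tuple `(γ_i + z_i q)_i` lies in the circuit variety of `M` and the
lifted vectors attached to the ground set of `M` span `ℂ³` (non-degenerate lifting). -/
def Liftable {d : ℕ} (M : PLM (Fin d)) (γ : Fin d → Fin 3 → ℂ) (q : Fin 3 → ℂ) : Prop :=
  ∃ z : Fin d → ℂ,
    (fun pr : Fin d × Fin 3 => γ pr.1 pr.2 + z pr.1 * q pr.2) ∈ circuitVariety M ∧
    Submodule.span ℂ ((fun i => fun j => γ i j + z i * q j) '' M.E) = ⊤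


/-! ### Auxiliary lemmas for the proof of Statement 7 -/

section LiftHelpers
open Submodule Module

variable {d : ℕ}

lemma linDep_iff_finrank' (γc : Config d) (S : Set (Fin d)) :
    LinDep γc S ↔ Module.finrank ℂ (span ℂ (cvec γc '' S)) < S.ncard := by
  haveI : Fintype S := S.toFinite.fintype
  have himg : Set.range (fun i : S => cvec γc i) = cvec γc '' S := (Set.image_eq_range _ _).symm
  have hcard : S.ncard = Fintype.card S := by
    rw [← Nat.card_coe_set_eq, Nat.card_eq_fintype_card]
  have hle : Module.finrank ℂ (span ℂ (cvec γc '' S)) ≤ Fintype.card S := by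
    rw [← himg]; exact finrank_range_le_card _
  rw [LinDep, linearIndependent_iff_card_eq_finrank_span]
  unfold Set.finrank
  rw [himg, hcard]
  omega

lemma linDep_of_mem_submodule (γc : Config d) (S : Set (Fin d)) (W : Submodule ℂ (Fin 3 → ℂ))
    (hmem : ∀ i ∈ S, cvec γc i ∈ W) (hlt : Module.finrank ℂ W < S.ncard) : LinDep γc S := by
  rw [linDep_iff_finrank']
  refine lt_of_le_of_lt (Submodule.finrank_mono ?_) hlt
  rw [Submodule.span_le]
  rintro _ ⟨i, hi, rfl⟩
  exact hmem i hi

lemma linDep_congr {c₁ c₂ : Config d} {S : Set (Fin d)} (h : ∀ i ∈ S, cvec c₁ i = cvec c₂ i) :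
    LinDep c₁ S ↔ LinDep c₂ S := by
  unfold LinDep
  rw [show (fun i : S => cvec c₁ i) = (fun i : S => cvec c₂ i) from funext fun i => h i i.2]

lemma finrank_sup_le' (A B : Submodule ℂ (Fin 3 → ℂ)) :
    Module.finrank ℂ (A ⊔ B : Submodule ℂ (Fin 3 → ℂ)) ≤
      Module.finrank ℂ A + Module.finrank ℂ B := by
  have := Submodule.finrank_sup_add_finrank_inf_eq A B
  omega

lemma finrank_span_singleton_le' (v : Fin 3 → ℂ) :
    Module.finrank ℂ (span ℂ ({v} : Set (Fin 3 → ℂ))) ≤ 1 := by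
  rcases eq_or_ne v 0 with rfl | hv
  · rw [Submodule.span_zero_singleton]; simp
  · rw [finrank_span_singleton hv]

lemma finrank_span_pair {u v : Fin 3 → ℂ} (hu : u ≠ 0) (hv : v ∉ span ℂ ({u} : Set (Fin 3 → ℂ))) :
    Module.finrank ℂ (span ℂ ({u, v} : Set (Fin 3 → ℂ))) = 2 := by
  have hlt : span ℂ ({u} : Set (Fin 3 → ℂ)) < span ℂ ({u, v} : Set (Fin 3 → ℂ)) := by
    refine lt_of_le_of_ne (span_mono (by simp)) fun h => hv ?_
    rw [h]
    exact subset_span (by simp)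
  have h1 : Module.finrank ℂ (span ℂ ({u} : Set (Fin 3 → ℂ))) = 1 := finrank_span_singleton hu
  have h2 : Module.finrank ℂ (span ℂ ({u, v} : Set (Fin 3 → ℂ))) ≤ 2 := by
    have heq : ({u, v} : Set (Fin 3 → ℂ)) = {u} ∪ {v} := rfl
    rw [heq, Submodule.span_union]
    exact (finrank_sup_le' _ _).trans
      (add_le_add (finrank_span_singleton_le' u) (finrank_span_singleton_le' v))
  have h3 := Submodule.finrank_lt_finrank_of_lt hlt
  omega

lemma subset_pair_of_ncard_le_two {β : Type*} [Nonempty β] {s : Set β} (hfin : s.Finite)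
    (h : s.ncard ≤ 2) : ∃ a b, s ⊆ {a, b} := by
  rcases s.eq_empty_or_nonempty with rfl | ⟨a, ha⟩
  · exact ⟨Classical.arbitrary β, Classical.arbitrary β, by simp⟩
  by_cases h2 : ∃ b ∈ s, b ≠ a
  · obtain ⟨b, hb, hba⟩ := h2
    refine ⟨a, b, fun c hc => ?_⟩
    by_contra hc'
    simp only [Set.mem_insert_iff, Set.mem_singleton_iff] at hc'
    push_neg at hc'
    have hsub : ({a, b, c} : Set β) ⊆ s := by
      rintro x (rfl | rfl | rfl)
      exacts [ha, hb, hc]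
    have h3 : ({a, b, c} : Set β).ncard = 3 := by
      rw [Set.ncard_insert_of_notMem (by simp [hba.symm, hc'.1.symm]),
        Set.ncard_pair (fun h => hc'.2 h.symm)]
    have := Set.ncard_le_ncard hsub hfin
    omega
  · push_neg at h2
    exact ⟨a, a, fun c hc => by simp [h2 c hc]⟩

lemma exists_line_of_dep (M : PLM (Fin d)) (hfin : M.E.Finite) (T : Set (Fin d))
    (hTE : T ⊆ M.E) (hdep : ¬ M.Indep T) (h3 : T.ncard = 3) :
    ∃ l, M.IsLine l ∧ T ⊆ l := by
  have hpre : M.LinePre T := by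
    refine ⟨hTE, hdep, fun t ht h3t => ?_⟩
    have heq : t = T := Set.eq_of_subset_of_ncard_le ht (le_of_eq (h3.trans h3t.symm))
    rwa [heq]
  have hcoll : {l : Set (Fin d) | M.LinePre l ∧ T ⊆ l}.Finite :=
    Set.Finite.subset hfin.finite_subsets (fun l hl => hl.1.1)
  have hne : {l : Set (Fin d) | M.LinePre l ∧ T ⊆ l}.Nonempty := ⟨T, hpre, subset_rfl⟩
  obtain ⟨l, hl, hmax⟩ := Set.Finite.exists_maximalFor id _ hcoll hne
  exact ⟨l, ⟨hl.1, fun l' hl' hsub => Set.Subset.antisymm (hmax ⟨hl', hl.2.trans hsub⟩ hsub) hsub⟩, hl.2⟩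

end LiftHelpers

/-- Let `M` be a simple rank-3 matroid on `[d]`, `d ≥ 4`, let `L ⊂ ℂ³` be
a 2-dimensional subspace, let `γ_1, …, γ_{d-1}` be nonzero vectors in `L`, and let
`q ∈ ℂ³ \ L`.  Assume `(γ_1, …, γ_{d-1})` is liftable from `q` with respect to `M|[d-1]`
and that the point `d` has degree at most 2 in `M`.  Then there is a nonzero `γ_d ∈ L`
making `(γ_1, …, γ_d)` liftable from `q` with respect to `M`. -/
theorem liftable_extension_low_degree (d : ℕ) (hd : 4 ≤ d) (M : PLM (Fin d))
    (hE : M.E = Set.univ) (hmat : M.IsMatroid) (hs : M.Simple) (hrk : M.RankEq3)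
    (last : Fin d) (hlast : (last : ℕ) = d - 1)
    (L : Submodule ℂ (Fin 3 → ℂ)) (hL : Module.finrank ℂ L = 2)
    (γ : Fin d → Fin 3 → ℂ)
    (hmemL : ∀ i : Fin d, i ≠ last → γ i ∈ L)
    (hnz : ∀ i : Fin d, i ≠ last → γ i ≠ 0)
    (q : Fin 3 → ℂ) (hq : q ∉ L)
    (hlift : Liftable (M.restrict {x | x ≠ last}) γ q)
    (hdeg : M.degree last ≤ 2) :
    ∃ v : Fin 3 → ℂ, v ∈ L ∧ v ≠ 0 ∧ Liftable M (Function.update γ last v) q := by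
  classical
  obtain ⟨hEfin, -, -, -, -⟩ := hmat
  obtain ⟨z, hz1, hz2⟩ := hlift
  set X : Set (Fin d) := {x | x ≠ last} with hXdef
  have hresE : (M.restrict X).E = X := by
    simp [PLM.restrict, hE]
  set γ' : Fin d → Fin 3 → ℂ := fun i => fun j => γ i j + z i * q j with hγ'def
  have hγ'vec : ∀ i, γ' i = γ i + z i • q := by
    intro i; funext j
    simp [hγ'def, smul_eq_mul]
  have hspanX : Submodule.span ℂ (γ' '' X) = ⊤ := by
    rw [hresE] at hz2; exact hz2
  have hγ'cvec : ∀ i : Fin d,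
      cvec (fun pr : Fin d × Fin 3 => γ pr.1 pr.2 + z pr.1 * q pr.2) i = γ' i := by
    intro i; funext j
    show γ i j + z i * q j = γ' i j
    rw [hγ'def]
  have hdep' : ∀ S : Set (Fin d), S ⊆ X → ¬ M.Indep S →
      LinDep (fun pr : Fin d × Fin 3 => γ pr.1 pr.2 + z pr.1 * q pr.2) S := by
    intro S hSX hdepS
    exact hz1 S (by rw [hresE]; exact hSX) (fun hI => hdepS hI.1)
  -- basic facts
  have hq0 : q ≠ 0 := fun h => hq (h ▸ L.zero_mem)
  have hγ'nz : ∀ i : Fin d, i ≠ last → γ' i ≠ 0 := by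
    intro i hi h0
    rw [hγ'vec i] at h0
    have h0' : γ i = (-(z i)) • q := by
      have h := eq_neg_of_add_eq_zero_left h0
      rwa [← neg_smul] at h
    rcases eq_or_ne (z i) 0 with hz0 | hz0
    · rw [hz0] at h0'; simp at h0'
      exact hnz i hi h0'
    · apply hq
      have hqe : q = (-(z i))⁻¹ • γ i := by
        rw [h0', smul_smul, inv_mul_cancel₀ (neg_ne_zero.mpr hz0), one_smul]
      rw [hqe]
      exact L.smul_mem _ (hmemL i hi)
  have hdep3 : ∀ S : Set (Fin d), ¬ M.Indep S → 3 ≤ S.ncard := by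
    intro S hdepS
    by_contra hlt
    exact hdepS (hs S (by rw [hE]; exact Set.subset_univ S) (by omega))
  have hfr3 : Module.finrank ℂ (Fin 3 → ℂ) = 3 := by simp
  have hbig : ∀ (c : Config d) (S : Set (Fin d)), 4 ≤ S.ncard → LinDep c S := by
    intro c S h4
    refine linDep_of_mem_submodule c S ⊤ (fun i _ => Submodule.mem_top) ?_
    rw [finrank_top, hfr3]
    omega
  have htriple : ∀ S : Set (Fin d), S.ncard = 3 → last ∈ S →
      ∃ x y, x ≠ last ∧ y ≠ last ∧ x ≠ y ∧ x ∈ S ∧ y ∈ S ∧ S = {x, y, last} := by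
    intro S h3 hlS
    have h2 : (S \ {last}).ncard = 2 := by
      rw [Set.ncard_diff_singleton_of_mem hlS]
      omega
    obtain ⟨x, y, hxy, hset⟩ := Set.ncard_eq_two.mp h2
    have hx : x ∈ S \ {last} := by rw [hset]; simp
    have hy : y ∈ S \ {last} := by rw [hset]; simp
    have hxne : x ≠ last := by simpa using hx.2
    have hyne : y ≠ last := by simpa using hy.2
    refine ⟨x, y, hxne, hyne, hxy, hx.1, hy.1, ?_⟩
    have h1 : insert last (S \ {last}) = S := by
      rw [Set.insert_diff_singleton, Set.insert_eq_self.mpr hlS]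
    rw [← h1, hset]
    ext a
    simp only [Set.mem_insert_iff, Set.mem_singleton_iff]
    tauto
  -- lines through `last`
  have hdeg' : {l : Set (Fin d) | M.IsLine l ∧ last ∈ l}.ncard ≤ 2 := hdeg
  obtain ⟨l1, l2, hcov⟩ := subset_pair_of_ncard_le_two (Set.toFinite _) hdeg'
  have key : ∀ S : Set (Fin d), ¬ M.Indep S → S.ncard = 3 → last ∈ S →
      ∃ l, (l = l1 ∨ l = l2) ∧ M.IsLine l ∧ S ⊆ l := by
    intro S hdepS h3 hlS
    obtain ⟨l, hline, hsub⟩ := exists_line_of_dep M hEfin S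
      (by rw [hE]; exact Set.subset_univ _) hdepS h3
    have hmem : l ∈ ({l1, l2} : Set (Set (Fin d))) := hcov ⟨hline, hsub hlS⟩
    simp only [Set.mem_insert_iff, Set.mem_singleton_iff] at hmem
    exact ⟨l, hmem, hline, hsub⟩
  -- two independent directions among the unlifted points
  haveI : Nontrivial (Fin d) := ⟨⟨⟨0, by omega⟩, ⟨1, by omega⟩, by simp [Fin.ext_iff]⟩⟩
  obtain ⟨a0, ha0⟩ := exists_ne last
  have hj0ex : ∃ j0 : Fin d, j0 ≠ last ∧ γ j0 ∉ Submodule.span ℂ ({γ a0} : Set (Fin 3 → ℂ)) := by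
    by_contra hcon
    push_neg at hcon
    have hle : Submodule.span ℂ (γ' '' X) ≤
        Submodule.span ℂ ({γ a0} : Set (Fin 3 → ℂ)) ⊔ Submodule.span ℂ ({q} : Set (Fin 3 → ℂ)) := by
      rw [Submodule.span_le]
      rintro _ ⟨i, hi, rfl⟩
      have hine : i ≠ last := hi
      rw [hγ'vec i]
      exact Submodule.add_mem _ (Submodule.mem_sup_left (hcon i hine))
        (Submodule.mem_sup_right (Submodule.smul_mem _ _ (Submodule.mem_span_singleton_self q)))
    rw [hspanX] at hle
    have h1 : Module.finrank ℂ (⊤ : Submodule ℂ (Fin 3 → ℂ)) ≤ 2 :=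
      le_trans (Submodule.finrank_mono hle) (le_trans (finrank_sup_le' _ _)
        (add_le_add (finrank_span_singleton_le' _) (finrank_span_singleton_le' _)))
    rw [finrank_top, hfr3] at h1
    omega
  obtain ⟨j0, hj0ne, hj0⟩ := hj0ex
  -- cvec computations for the candidate configurations
  have hcvec1 : ∀ (v : Fin 3 → ℂ) (μ : ℂ) (i : Fin d), i ≠ last →
      cvec (fun pr : Fin d × Fin 3 =>
        Function.update γ last v pr.1 pr.2 + Function.update z last μ pr.1 * q pr.2) i = γ' i := by
    intro v μ i hi
    funext j
    show Function.update γ last v i j + Function.update z last μ i * q j = γ' i j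
    rw [Function.update_of_ne hi, Function.update_of_ne hi, hγ'def]
  have hcveclast : ∀ (v : Fin 3 → ℂ) (μ : ℂ),
      cvec (fun pr : Fin d × Fin 3 =>
        Function.update γ last v pr.1 pr.2 + Function.update z last μ pr.1 * q pr.2) last
        = v + μ • q := by
    intro v μ
    funext j
    show Function.update γ last v last j + Function.update z last μ last * q j = (v + μ • q) j
    rw [Function.update_self, Function.update_self]
    simp [smul_eq_mul]
  -- main finishing device: keep z on old points, lift `last` to v + μ • q
  have finishT1 : ∀ (v : Fin 3 → ℂ) (μ : ℂ), v ∈ L → v ≠ 0 →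
      (∀ S : Set (Fin d), ¬ M.Indep S → S.ncard = 3 → last ∈ S → ∀ x y : Fin d,
        x ≠ last → y ≠ last → x ≠ y → x ∈ S → y ∈ S → S = {x, y, last} →
        LinDep (fun pr : Fin d × Fin 3 =>
          Function.update γ last v pr.1 pr.2 + Function.update z last μ pr.1 * q pr.2) S) →
      ∃ v' : Fin 3 → ℂ, v' ∈ L ∧ v' ≠ 0 ∧ Liftable M (Function.update γ last v') q := by
    intro v μ hvL hv0 htrip
    refine ⟨v, hvL, hv0, Function.update z last μ, ?_, ?_⟩
    · intro S hSE hdepS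
      have h3 := hdep3 S hdepS
      rcases lt_or_ge S.ncard 4 with h4 | h4
      · have h3' : S.ncard = 3 := by omega
        by_cases hlS : last ∈ S
        · obtain ⟨x, y, hx, hy, hxy, hxS, hyS, hSeq⟩ := htriple S h3' hlS
          exact htrip S hdepS h3' hlS x y hx hy hxy hxS hyS hSeq
        · have hSX : S ⊆ X := fun i hi h => hlS (h ▸ hi)
          have h := hdep' S hSX hdepS
          refine (linDep_congr (fun i hi => ?_)).mp h
          rw [hγ'cvec i, hcvec1 v μ i (hSX hi)]
      · exact hbig _ S h4
    · rw [hE]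
      have himg : ∀ i ∈ X,
          (fun i => fun j => Function.update γ last v i j + Function.update z last μ i * q j) i
            = γ' i := by
        intro i hi
        exact hcvec1 v μ i hi
      have himg2 : (fun i => fun j =>
          Function.update γ last v i j + Function.update z last μ i * q j) '' X = γ' '' X :=
        Set.image_congr himg
      refine eq_top_iff.mpr (le_trans (le_of_eq hspanX.symm) ?_)
      rw [← himg2]
      exact Submodule.span_mono (Set.image_mono (Set.subset_univ X))
  -- the ¬Q trick: all lifted points of the line are pairwise proportional
  have noQ : ∀ l : Set (Fin d),
      ¬ (∃ x, x ∈ l ∧ x ≠ last ∧ ∃ y, y ∈ l ∧ y ≠ last ∧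
          γ' y ∉ Submodule.span ℂ ({γ' x} : Set (Fin 3 → ℂ))) →
      ∀ (c : Config d), (∀ i, i ≠ last → i ∈ l → cvec c i = γ' i) →
      ∀ S : Set (Fin d), S.ncard = 3 → ∀ x y : Fin d, x ≠ last → y ≠ last → x ≠ y →
        S = {x, y, last} → x ∈ l → y ∈ l → LinDep c S := by
    intro l hnq c hc S h3 x y hxn hyn hxy hSeq hxl hyl
    push_neg at hnq
    have hyx : γ' y ∈ Submodule.span ℂ ({γ' x} : Set (Fin 3 → ℂ)) := hnq x hxl hxn y hyl hyn
    refine linDep_of_mem_submodule c S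
      (Submodule.span ℂ ({γ' x} : Set (Fin 3 → ℂ)) ⊔
        Submodule.span ℂ ({cvec c last} : Set (Fin 3 → ℂ))) ?_ ?_
    · intro i hi
      simp only [hSeq, Set.mem_insert_iff, Set.mem_singleton_iff] at hi
      rcases hi with rfl | rfl | rfl
      · rw [hc i hxn hxl]
        exact Submodule.mem_sup_left (Submodule.mem_span_singleton_self _)
      · rw [hc i hyn hyl]
        exact Submodule.mem_sup_left hyx
      · exact Submodule.mem_sup_right (Submodule.mem_span_singleton_self _)
    · rw [h3]
      exact lt_of_le_of_lt (le_trans (finrank_sup_le' _ _)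
        (add_le_add (finrank_span_singleton_le' _) (finrank_span_singleton_le' _))) (by norm_num)
  -- the x1 trick: put the new point on top of an existing point of the line
  have xtrick : ∀ l : Set (Fin d), M.LinePre l → ∀ x1, x1 ∈ l → x1 ≠ last →
      ∀ (c : Config d), (∀ i, i ≠ last → cvec c i = γ' i) → cvec c last = γ' x1 →
      ∀ S : Set (Fin d), S.ncard = 3 → ∀ x y : Fin d, x ≠ last → y ≠ last → x ≠ y →
        S = {x, y, last} → x ∈ l → y ∈ l → LinDep c S := by
    intro l hpre x1 hx1l hx1n c hc hclast S h3 x y hxn hyn hxy hSeq hxl hyl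
    by_cases hx1xy : x1 = x ∨ x1 = y
    · refine linDep_of_mem_submodule c S
        (Submodule.span ℂ ({γ' x} : Set (Fin 3 → ℂ)) ⊔
          Submodule.span ℂ ({γ' y} : Set (Fin 3 → ℂ))) ?_ ?_
      · intro i hi
        simp only [hSeq, Set.mem_insert_iff, Set.mem_singleton_iff] at hi
        rcases hi with rfl | rfl | rfl
        · rw [hc i hxn]
          exact Submodule.mem_sup_left (Submodule.mem_span_singleton_self _)
        · rw [hc i hyn]
          exact Submodule.mem_sup_right (Submodule.mem_span_singleton_self _)
        · rw [hclast]
          rcases hx1xy with h | h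
          · rw [h]
            exact Submodule.mem_sup_left (Submodule.mem_span_singleton_self _)
          · rw [h]
            exact Submodule.mem_sup_right (Submodule.mem_span_singleton_self _)
      · rw [h3]
        exact lt_of_le_of_lt (le_trans (finrank_sup_le' _ _)
          (add_le_add (finrank_span_singleton_le' _) (finrank_span_singleton_le' _))) (by norm_num)
    · push_neg at hx1xy
      obtain ⟨hx1x, hx1y⟩ := hx1xy
      have hT'card : ({x, y, x1} : Set (Fin d)).ncard = 3 := by
        rw [Set.ncard_insert_of_notMem (by simp [hxy, Ne.symm hx1x]),
          Set.ncard_pair (Ne.symm hx1y)]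
      have hT'dep : ¬ M.Indep {x, y, x1} := by
        refine hpre.2.2 {x, y, x1} ?_ hT'card
        rintro i hi
        simp only [Set.mem_insert_iff, Set.mem_singleton_iff] at hi
        rcases hi with rfl | rfl | rfl
        exacts [hxl, hyl, hx1l]
      have hT'X : ({x, y, x1} : Set (Fin d)) ⊆ X := by
        rintro i hi
        simp only [Set.mem_insert_iff, Set.mem_singleton_iff] at hi
        rcases hi with rfl | rfl | rfl
        exacts [hxn, hyn, hx1n]
      have hLD := hdep' {x, y, x1} hT'X hT'dep
      have himgT : cvec (fun pr : Fin d × Fin 3 => γ pr.1 pr.2 + z pr.1 * q pr.2) ''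
          ({x, y, x1} : Set (Fin d)) = γ' '' ({x, y, x1} : Set (Fin d)) :=
        Set.image_congr fun i _ => hγ'cvec i
      rw [linDep_iff_finrank', himgT, hT'card] at hLD
      refine linDep_of_mem_submodule c S
        (Submodule.span ℂ (γ' '' ({x, y, x1} : Set (Fin d)))) ?_ ?_
      · intro i hi
        simp only [hSeq, Set.mem_insert_iff, Set.mem_singleton_iff] at hi
        rcases hi with rfl | rfl | rfl
        · rw [hc i hxn]
          exact Submodule.subset_span (Set.mem_image_of_mem γ' (by simp))
        · rw [hc i hyn]
          exact Submodule.subset_span (Set.mem_image_of_mem γ' (by simp))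
        · rw [hclast]
          exact Submodule.subset_span (Set.mem_image_of_mem γ' (by simp))
      · rw [h3]
        exact hLD
  -- membership of lifted points of a line in the plane spanned by an independent pair
  have memP : ∀ l : Set (Fin d), M.LinePre l → ∀ x1, x1 ∈ l → x1 ≠ last →
      ∀ y1, y1 ∈ l → y1 ≠ last → γ' y1 ∉ Submodule.span ℂ ({γ' x1} : Set (Fin 3 → ℂ)) →
      ∀ b, b ∈ l → b ≠ last →
        γ' b ∈ Submodule.span ℂ ({γ' x1, γ' y1} : Set (Fin 3 → ℂ)) := by
    intro l hpre x1 hx1l hx1n y1 hy1l hy1n hind b hbl hbn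
    have hxy1 : x1 ≠ y1 := fun h => hind (h ▸ Submodule.mem_span_singleton_self _)
    by_cases hb : b = x1 ∨ b = y1
    · rcases hb with rfl | rfl
      · exact Submodule.subset_span (by simp)
      · exact Submodule.subset_span (by simp)
    push_neg at hb
    have hT'card : ({b, x1, y1} : Set (Fin d)).ncard = 3 := by
      rw [Set.ncard_insert_of_notMem (by simp [hb.1, hb.2]), Set.ncard_pair hxy1]
    have hT'dep : ¬ M.Indep {b, x1, y1} := by
      refine hpre.2.2 {b, x1, y1} ?_ hT'card
      rintro i hi
      simp only [Set.mem_insert_iff, Set.mem_singleton_iff] at hi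
      rcases hi with rfl | rfl | rfl
      exacts [hbl, hx1l, hy1l]
    have hT'X : ({b, x1, y1} : Set (Fin d)) ⊆ X := by
      rintro i hi
      simp only [Set.mem_insert_iff, Set.mem_singleton_iff] at hi
      rcases hi with rfl | rfl | rfl
      exacts [hbn, hx1n, hy1n]
    have hLD := hdep' {b, x1, y1} hT'X hT'dep
    have himgT : cvec (fun pr : Fin d × Fin 3 => γ pr.1 pr.2 + z pr.1 * q pr.2) ''
        ({b, x1, y1} : Set (Fin d)) = γ' '' ({b, x1, y1} : Set (Fin d)) :=
      Set.image_congr fun i _ => hγ'cvec i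
    rw [linDep_iff_finrank', himgT, hT'card] at hLD
    have hPW : Submodule.span ℂ ({γ' x1, γ' y1} : Set (Fin 3 → ℂ)) ≤
        Submodule.span ℂ (γ' '' ({b, x1, y1} : Set (Fin d))) := by
      rw [Submodule.span_le]
      rintro u hu
      simp only [Set.mem_insert_iff, Set.mem_singleton_iff] at hu
      rcases hu with rfl | rfl
      · exact Submodule.subset_span (Set.mem_image_of_mem γ' (by simp))
      · exact Submodule.subset_span (Set.mem_image_of_mem γ' (by simp))
    have hWP := Submodule.eq_of_le_of_finrank_le hPW
      (by rw [finrank_span_pair (hγ'nz x1 hx1n) hind]; omega)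
    rw [hWP]
    exact Submodule.subset_span (Set.mem_image_of_mem γ' (by simp))
  -- case analysis on the two lines
  by_cases hQ1 : ∃ x, x ∈ l1 ∧ x ≠ last ∧ ∃ y, y ∈ l1 ∧ y ≠ last ∧
      γ' y ∉ Submodule.span ℂ ({γ' x} : Set (Fin 3 → ℂ))
  · by_cases hQ2 : ∃ x, x ∈ l2 ∧ x ≠ last ∧ ∃ y, y ∈ l2 ∧ y ≠ last ∧
        γ' y ∉ Submodule.span ℂ ({γ' x} : Set (Fin 3 → ℂ))
    · -- both lines have an independent lifted pair
      obtain ⟨x1, hx1l, hx1n, y1, hy1l, hy1n, hy1⟩ := hQ1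
      obtain ⟨x2, hx2l, hx2n, y2, hy2l, hy2n, hy2⟩ := hQ2
      have hP1rk : Module.finrank ℂ
          (Submodule.span ℂ ({γ' x1, γ' y1} : Set (Fin 3 → ℂ))) = 2 :=
        finrank_span_pair (hγ'nz x1 hx1n) hy1
      have hP2rk : Module.finrank ℂ
          (Submodule.span ℂ ({γ' x2, γ' y2} : Set (Fin 3 → ℂ))) = 2 :=
        finrank_span_pair (hγ'nz x2 hx2n) hy2
      by_cases hw : ∃ w, w ∈ Submodule.span ℂ ({γ' x1, γ' y1} : Set (Fin 3 → ℂ)) ⊓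
          Submodule.span ℂ ({γ' x2, γ' y2} : Set (Fin 3 → ℂ)) ∧
          w ∉ Submodule.span ℂ ({q} : Set (Fin 3 → ℂ))
      · -- good case: a point of the intersection off the q-axis
        obtain ⟨w, hwK, hwq⟩ := hw
        have hinf0 : L ⊓ Submodule.span ℂ ({q} : Set (Fin 3 → ℂ)) = ⊥ := by
          rw [eq_bot_iff]
          intro x hx
          obtain ⟨hxL, hxq⟩ := Submodule.mem_inf.mp hx
          rw [Submodule.mem_span_singleton] at hxq
          obtain ⟨c, rfl⟩ := hxq
          rcases eq_or_ne c 0 with rfl | hc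
          · simp
          · exfalso
            apply hq
            have hmem := L.smul_mem c⁻¹ hxL
            rwa [smul_smul, inv_mul_cancel₀ hc, one_smul] at hmem
        have hLq : L ⊔ Submodule.span ℂ ({q} : Set (Fin 3 → ℂ)) = ⊤ := by
          apply Submodule.eq_top_of_finrank_eq
          have hsum := Submodule.finrank_sup_add_finrank_inf_eq L
            (Submodule.span ℂ ({q} : Set (Fin 3 → ℂ)))
          rw [hinf0, finrank_bot, hL, finrank_span_singleton hq0] at hsum
          rw [hfr3]
          omega
        have hwmem : w ∈ L ⊔ Submodule.span ℂ ({q} : Set (Fin 3 → ℂ)) := by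
          rw [hLq]; exact Submodule.mem_top
        obtain ⟨v, hvL, u, hu, hvu⟩ := Submodule.mem_sup.mp hwmem
        rw [Submodule.mem_span_singleton] at hu
        obtain ⟨μ, rfl⟩ := hu
        have hv0 : v ≠ 0 := by
          rintro rfl
          apply hwq
          rw [← hvu, zero_add]
          exact Submodule.smul_mem _ _ (Submodule.mem_span_singleton_self q)
        refine finishT1 v μ hvL hv0 ?_
        intro S hdepS h3' hlS x y hxn hyn hxy hxS hyS hSeq
        obtain ⟨l, hl12, hline, hsub⟩ := key S hdepS h3' hlS
        have hclast : cvec (fun pr : Fin d × Fin 3 =>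
            Function.update γ last v pr.1 pr.2 + Function.update z last μ pr.1 * q pr.2) last
            = w := (hcveclast v μ).trans hvu
        rcases hl12 with rfl | rfl
        · refine linDep_of_mem_submodule _ S
            (Submodule.span ℂ ({γ' x1, γ' y1} : Set (Fin 3 → ℂ))) ?_ ?_
          · intro i hi
            simp only [hSeq, Set.mem_insert_iff, Set.mem_singleton_iff] at hi
            rcases hi with rfl | rfl | rfl
            · rw [hcvec1 v μ i hxn]
              exact memP l hline.1 x1 hx1l hx1n y1 hy1l hy1n hy1 i (hsub hxS) hxn
            · rw [hcvec1 v μ i hyn]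
              exact memP l hline.1 x1 hx1l hx1n y1 hy1l hy1n hy1 i (hsub hyS) hyn
            · rw [hclast]
              exact hwK.1
          · rw [h3', hP1rk]
            norm_num
        · refine linDep_of_mem_submodule _ S
            (Submodule.span ℂ ({γ' x2, γ' y2} : Set (Fin 3 → ℂ))) ?_ ?_
          · intro i hi
            simp only [hSeq, Set.mem_insert_iff, Set.mem_singleton_iff] at hi
            rcases hi with rfl | rfl | rfl
            · rw [hcvec1 v μ i hxn]
              exact memP l hline.1 x2 hx2l hx2n y2 hy2l hy2n hy2 i (hsub hxS) hxn
            · rw [hcvec1 v μ i hyn]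
              exact memP l hline.1 x2 hx2l hx2n y2 hy2l hy2n hy2 i (hsub hyS) hyn
            · rw [hclast]
              exact hwK.2
          · rw [h3', hP2rk]
            norm_num
      · -- degenerate case: the two planes meet exactly in the q-axis
        push_neg at hw
        have hK1 : 1 ≤ Module.finrank ℂ
            (Submodule.span ℂ ({γ' x1, γ' y1} : Set (Fin 3 → ℂ)) ⊓
              Submodule.span ℂ ({γ' x2, γ' y2} : Set (Fin 3 → ℂ)) :
              Submodule ℂ (Fin 3 → ℂ)) := by
          have hsum := Submodule.finrank_sup_add_finrank_inf_eq
            (Submodule.span ℂ ({γ' x1, γ' y1} : Set (Fin 3 → ℂ)))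
            (Submodule.span ℂ ({γ' x2, γ' y2} : Set (Fin 3 → ℂ)))
          have hsup : Module.finrank ℂ
              (Submodule.span ℂ ({γ' x1, γ' y1} : Set (Fin 3 → ℂ)) ⊔
                Submodule.span ℂ ({γ' x2, γ' y2} : Set (Fin 3 → ℂ)) :
                Submodule ℂ (Fin 3 → ℂ)) ≤ 3 := by
            exact le_trans (Submodule.finrank_le _) (le_of_eq hfr3)
          rw [hP1rk, hP2rk] at hsum
          omega
        have hKne : (Submodule.span ℂ ({γ' x1, γ' y1} : Set (Fin 3 → ℂ)) ⊓
            Submodule.span ℂ ({γ' x2, γ' y2} : Set (Fin 3 → ℂ)) :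
            Submodule ℂ (Fin 3 → ℂ)) ≠ ⊥ := by
          intro h
          rw [h, finrank_bot] at hK1
          omega
        obtain ⟨k, hkK, hk0⟩ := (Submodule.ne_bot_iff _).mp hKne
        have hkq := hw k hkK
        rw [Submodule.mem_span_singleton] at hkq
        obtain ⟨c, rfl⟩ := hkq
        have hc0 : c ≠ 0 := by rintro rfl; simp at hk0
        have hqK : q ∈ Submodule.span ℂ ({γ' x1, γ' y1} : Set (Fin 3 → ℂ)) ⊓
            Submodule.span ℂ ({γ' x2, γ' y2} : Set (Fin 3 → ℂ)) := by
          have hsm := Submodule.smul_mem _ c⁻¹ hkK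
          rwa [smul_smul, inv_mul_cancel₀ hc0, one_smul] at hsm
        -- all unlifted points of each line lie on a common line of L
        have hmemInf : ∀ l : Set (Fin d), M.LinePre l → ∀ x', x' ∈ l → x' ≠ last →
            ∀ y', y' ∈ l → y' ≠ last →
            γ' y' ∉ Submodule.span ℂ ({γ' x'} : Set (Fin 3 → ℂ)) →
            q ∈ Submodule.span ℂ ({γ' x', γ' y'} : Set (Fin 3 → ℂ)) →
            ∀ b, b ∈ l → b ≠ last →
              γ b ∈ (Submodule.span ℂ ({γ' x', γ' y'} : Set (Fin 3 → ℂ)) ⊓ L :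
                Submodule ℂ (Fin 3 → ℂ)) := by
          intro l hpre x' hx' hx'n y' hy' hy'n hind hqP b hbl hbn
          have hb := memP l hpre x' hx' hx'n y' hy' hy'n hind b hbl hbn
          refine Submodule.mem_inf.mpr ⟨?_, hmemL b hbn⟩
          have hgb : γ b = γ' b - z b • q := by
            rw [hγ'vec b, add_sub_cancel_right]
          rw [hgb]
          exact Submodule.sub_mem _ hb (Submodule.smul_mem _ _ hqP)
        have hrkInf : ∀ P : Submodule ℂ (Fin 3 → ℂ), Module.finrank ℂ P = 2 → q ∈ P →
            Module.finrank ℂ (P ⊓ L : Submodule ℂ (Fin 3 → ℂ)) ≤ 1 := by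
          intro P hPrk hqP
          have hlt : (P ⊓ L : Submodule ℂ (Fin 3 → ℂ)) < P := by
            refine lt_of_le_of_ne inf_le_left fun h => hq ?_
            rw [← h] at hqP
            exact hqP.2
          have := Submodule.finrank_lt_finrank_of_lt hlt
          omega
        -- use the trivial lift
        have hcvec2 : ∀ i : Fin d, i ≠ last →
            cvec (fun pr : Fin d × Fin 3 => Function.update γ last (γ a0) pr.1 pr.2 +
              (if pr.1 = last then (1 : ℂ) else 0) * q pr.2) i = γ i := by
          intro i hi
          funext j
          show Function.update γ last (γ a0) i j + (if i = last then (1 : ℂ) else 0) * q j = γ i j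
          rw [Function.update_of_ne hi, if_neg hi, zero_mul, add_zero]
        have hcvec2last :
            cvec (fun pr : Fin d × Fin 3 => Function.update γ last (γ a0) pr.1 pr.2 +
              (if pr.1 = last then (1 : ℂ) else 0) * q pr.2) last = γ a0 + q := by
          funext j
          show Function.update γ last (γ a0) last j +
            (if last = last then (1 : ℂ) else 0) * q j = (γ a0 + q) j
          rw [Function.update_self, if_pos rfl, one_mul]
          rfl
        refine ⟨γ a0, hmemL a0 ha0, hnz a0 ha0,
          (fun i => if i = last then (1 : ℂ) else 0), ?_, ?_⟩
        · intro S hSE hdepS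
          have h3 := hdep3 S hdepS
          rcases lt_or_ge S.ncard 4 with h4 | h4
          · have h3' : S.ncard = 3 := by omega
            by_cases hlS : last ∈ S
            · obtain ⟨x, y, hxn, hyn, hxy, hxS, hyS, hSeq⟩ := htriple S h3' hlS
              obtain ⟨l, hl12, hline, hsub⟩ := key S hdepS h3' hlS
              rcases hl12 with rfl | rfl
              · refine linDep_of_mem_submodule _ S
                  ((Submodule.span ℂ ({γ' x1, γ' y1} : Set (Fin 3 → ℂ)) ⊓ L) ⊔
                    Submodule.span ℂ ({γ a0 + q} : Set (Fin 3 → ℂ))) ?_ ?_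
                · intro i hi
                  simp only [hSeq, Set.mem_insert_iff, Set.mem_singleton_iff] at hi
                  rcases hi with rfl | rfl | rfl
                  · rw [hcvec2 i hxn]
                    exact Submodule.mem_sup_left (hmemInf l hline.1 x1 hx1l hx1n y1 hy1l hy1n
                      hy1 (Submodule.mem_inf.mp hqK).1 i (hsub hxS) hxn)
                  · rw [hcvec2 i hyn]
                    exact Submodule.mem_sup_left (hmemInf l hline.1 x1 hx1l hx1n y1 hy1l hy1n
                      hy1 (Submodule.mem_inf.mp hqK).1 i (hsub hyS) hyn)
                  · rw [hcvec2last]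
                    exact Submodule.mem_sup_right (Submodule.mem_span_singleton_self _)
                · rw [h3']
                  have hr1 := hrkInf _ hP1rk (Submodule.mem_inf.mp hqK).1
                  exact lt_of_le_of_lt (le_trans (finrank_sup_le' _ _)
                    (add_le_add hr1 (finrank_span_singleton_le' _))) (by norm_num)
              · refine linDep_of_mem_submodule _ S
                  ((Submodule.span ℂ ({γ' x2, γ' y2} : Set (Fin 3 → ℂ)) ⊓ L) ⊔
                    Submodule.span ℂ ({γ a0 + q} : Set (Fin 3 → ℂ))) ?_ ?_
                · intro i hi
                  simp only [hSeq, Set.mem_insert_iff, Set.mem_singleton_iff] at hi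
                  rcases hi with rfl | rfl | rfl
                  · rw [hcvec2 i hxn]
                    exact Submodule.mem_sup_left (hmemInf l hline.1 x2 hx2l hx2n y2 hy2l hy2n
                      hy2 (Submodule.mem_inf.mp hqK).2 i (hsub hxS) hxn)
                  · rw [hcvec2 i hyn]
                    exact Submodule.mem_sup_left (hmemInf l hline.1 x2 hx2l hx2n y2 hy2l hy2n
                      hy2 (Submodule.mem_inf.mp hqK).2 i (hsub hyS) hyn)
                  · rw [hcvec2last]
                    exact Submodule.mem_sup_right (Submodule.mem_span_singleton_self _)
                · rw [h3']
                  have hr2 := hrkInf _ hP2rk (Submodule.mem_inf.mp hqK).2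
                  exact lt_of_le_of_lt (le_trans (finrank_sup_le' _ _)
                    (add_le_add hr2 (finrank_span_singleton_le' _))) (by norm_num)
            · refine linDep_of_mem_submodule _ S L ?_ (by rw [h3', hL]; norm_num)
              intro i hi
              have hin : i ≠ last := fun h => hlS (h ▸ hi)
              rw [hcvec2 i hin]
              exact hmemL i hin
          · exact hbig _ S h4
        · rw [hE]
          show Submodule.span ℂ ((fun i => fun j => Function.update γ last (γ a0) i j +
            (if i = last then (1 : ℂ) else 0) * q j) '' Set.univ) = ⊤
          have hg2 : ∀ i : Fin d, i ≠ last →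
              (fun i => fun j => Function.update γ last (γ a0) i j +
                (if i = last then (1 : ℂ) else 0) * q j) i = γ i :=
            fun i hi => hcvec2 i hi
          have hg2last : (fun i => fun j => Function.update γ last (γ a0) i j +
              (if i = last then (1 : ℂ) else 0) * q j) last = γ a0 + q := hcvec2last
          have h1 : γ a0 ∈ Submodule.span ℂ
              ((fun i => fun j => Function.update γ last (γ a0) i j +
                (if i = last then (1 : ℂ) else 0) * q j) '' Set.univ) :=
            Submodule.subset_span ⟨a0, trivial, hg2 a0 ha0⟩
          have h2 : γ j0 ∈ Submodule.span ℂ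
              ((fun i => fun j => Function.update γ last (γ a0) i j +
                (if i = last then (1 : ℂ) else 0) * q j) '' Set.univ) :=
            Submodule.subset_span ⟨j0, trivial, hg2 j0 hj0ne⟩
          have h3 : γ a0 + q ∈ Submodule.span ℂ
              ((fun i => fun j => Function.update γ last (γ a0) i j +
                (if i = last then (1 : ℂ) else 0) * q j) '' Set.univ) :=
            Submodule.subset_span ⟨last, trivial, hg2last⟩
          have hqN : q ∈ Submodule.span ℂ
              ((fun i => fun j => Function.update γ last (γ a0) i j +
                (if i = last then (1 : ℂ) else 0) * q j) '' Set.univ) := by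
            have hsub := Submodule.sub_mem _ h3 h1
            rwa [add_sub_cancel_left] at hsub
          have hspair : Submodule.span ℂ ({γ a0, γ j0} : Set (Fin 3 → ℂ)) = L := by
            refine Submodule.eq_of_le_of_finrank_le ?_ ?_
            · rw [Submodule.span_le]
              rintro u hu
              simp only [Set.mem_insert_iff, Set.mem_singleton_iff] at hu
              rcases hu with rfl | rfl
              exacts [hmemL a0 ha0, hmemL j0 hj0ne]
            · rw [hL, finrank_span_pair (hnz a0 ha0) hj0]
          have hLN : L ≤ Submodule.span ℂ
              ((fun i => fun j => Function.update γ last (γ a0) i j +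
                (if i = last then (1 : ℂ) else 0) * q j) '' Set.univ) := by
            rw [← hspair, Submodule.span_le]
            rintro u hu
            simp only [Set.mem_insert_iff, Set.mem_singleton_iff] at hu
            rcases hu with rfl | rfl
            exacts [h1, h2]
          have hge3 : 3 ≤ Module.finrank ℂ (Submodule.span ℂ
              ((fun i => fun j => Function.update γ last (γ a0) i j +
                (if i = last then (1 : ℂ) else 0) * q j) '' Set.univ)) := by
            by_contra hlt
            push_neg at hlt
            have heqLN := Submodule.eq_of_le_of_finrank_le hLN (by rw [hL]; omega)
            rw [← heqLN] at hqN
            exact hq hqN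
          have hle3 : Module.finrank ℂ (Submodule.span ℂ
              ((fun i => fun j => Function.update γ last (γ a0) i j +
                (if i = last then (1 : ℂ) else 0) * q j) '' Set.univ)) ≤ 3 := by
            exact le_trans (Submodule.finrank_le _) (le_of_eq hfr3)
          exact Submodule.eq_top_of_finrank_eq (by rw [hfr3]; omega)
    · -- only the first line has an independent lifted pair
      obtain ⟨x1, hx1l, hx1n, y1, hy1l, hy1n, hy1⟩ := hQ1
      refine finishT1 (γ x1) (z x1) (hmemL x1 hx1n) (hnz x1 hx1n) ?_
      intro S hdepS h3' hlS x y hxn hyn hxy hxS hyS hSeq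
      obtain ⟨l, hl12, hline, hsub⟩ := key S hdepS h3' hlS
      have hclast : cvec (fun pr : Fin d × Fin 3 =>
          Function.update γ last (γ x1) pr.1 pr.2 +
            Function.update z last (z x1) pr.1 * q pr.2) last = γ' x1 :=
        (hcveclast (γ x1) (z x1)).trans (hγ'vec x1).symm
      rcases hl12 with rfl | rfl
      · exact xtrick l hline.1 x1 hx1l hx1n _ (fun i hi => hcvec1 _ _ i hi) hclast
          S h3' x y hxn hyn hxy hSeq (hsub hxS) (hsub hyS)
      · exact noQ l hQ2 _ (fun i hi _ => hcvec1 _ _ i hi)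
          S h3' x y hxn hyn hxy hSeq (hsub hxS) (hsub hyS)
  · by_cases hQ2 : ∃ x, x ∈ l2 ∧ x ≠ last ∧ ∃ y, y ∈ l2 ∧ y ≠ last ∧
        γ' y ∉ Submodule.span ℂ ({γ' x} : Set (Fin 3 → ℂ))
    · -- only the second line has an independent lifted pair
      obtain ⟨x2, hx2l, hx2n, y2, hy2l, hy2n, hy2⟩ := hQ2
      refine finishT1 (γ x2) (z x2) (hmemL x2 hx2n) (hnz x2 hx2n) ?_
      intro S hdepS h3' hlS x y hxn hyn hxy hxS hyS hSeq
      obtain ⟨l, hl12, hline, hsub⟩ := key S hdepS h3' hlS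
      have hclast : cvec (fun pr : Fin d × Fin 3 =>
          Function.update γ last (γ x2) pr.1 pr.2 +
            Function.update z last (z x2) pr.1 * q pr.2) last = γ' x2 :=
        (hcveclast (γ x2) (z x2)).trans (hγ'vec x2).symm
      rcases hl12 with rfl | rfl
      · exact noQ l hQ1 _ (fun i hi _ => hcvec1 _ _ i hi)
          S h3' x y hxn hyn hxy hSeq (hsub hxS) (hsub hyS)
      · exact xtrick l hline.1 x2 hx2l hx2n _ (fun i hi => hcvec1 _ _ i hi) hclast
          S h3' x y hxn hyn hxy hSeq (hsub hxS) (hsub hyS)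
    · -- no line has an independent lifted pair
      refine finishT1 (γ a0) (z a0) (hmemL a0 ha0) (hnz a0 ha0) ?_
      intro S hdepS h3' hlS x y hxn hyn hxy hxS hyS hSeq
      obtain ⟨l, hl12, hline, hsub⟩ := key S hdepS h3' hlS
      rcases hl12 with rfl | rfl
      · exact noQ l hQ1 _ (fun i hi _ => hcvec1 _ _ i hi)
          S h3' x y hxn hyn hxy hSeq (hsub hxS) (hsub hyS)
      · exact noQ l hQ2 _ (fun i hi _ => hcvec1 _ _ i hi)
          S h3' x y hxn hyn hxy hSeq (hsub hxS) (hsub hyS)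
end

section
/- Let M be the Pascal configuration on [9]. For every nonzero vector v ∈ ℂ³, the constant tuple γ = (v, v, v, v, v, v, v, v, v), in which all nine vectors coincide, lies in the matroid variety V_M. -/
/-! The Pascal configuration, on the ground set `[9]` identified with `Fin 9`
(the label `k ∈ {1, …, 9}` corresponds to `(k : Fin 9)`, so `9` corresponds to `0`). -/

/-- The seven dependent triples (lines) of the Pascal configuration. -/
def pascalTriples : Set (Set (Fin 9)) :=
  {{1, 6, 8}, {1, 5, 7}, {2, 4, 7}, {2, 6, 9}, {3, 4, 8}, {3, 5, 9}, {7, 8, 9}}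

/-- The Pascal configuration: the simple rank-3 matroid on `[9]` whose dependent
3-sets are exactly the seven triples of `pascalTriples`. -/
def pascal : PLM (Fin 9) :=
  ⟨Set.univ, fun S => S.ncard ≤ 2 ∨ (S.ncard = 3 ∧ S ∉ pascalTriples)⟩

namespace PascalAux

/-- Explicit 3×3 determinant of three vectors in `ℂ³`. -/
def D3 (x y z : Fin 3 → ℂ) : ℂ :=
  x 0 * (y 1 * z 2 - y 2 * z 1) - x 1 * (y 0 * z 2 - y 2 * z 0) + x 2 * (y 0 * z 1 - y 1 * z 0)

lemma li_iff_D3 (x y z : Fin 3 → ℂ) :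
    LinearIndependent ℂ ![x, y, z] ↔ D3 x y z ≠ 0 := by
  have h := Matrix.linearIndependent_rows_iff_isUnit (K := ℂ) (A := Matrix.of ![x, y, z])
  rw [Matrix.isUnit_iff_isUnit_det, isUnit_iff_ne_zero] at h
  have hd : (Matrix.of ![x, y, z]).det = D3 x y z := by
    rw [Matrix.det_fin_three]
    simp only [Matrix.of_apply, Matrix.cons_val', Matrix.cons_val_zero, Matrix.cons_val_one,
      Matrix.head_cons, Matrix.cons_val_two, Matrix.tail_cons, Matrix.head_fin_const,
      Matrix.empty_val', Matrix.cons_val_fin_one, D3]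
    ring
  rw [hd] at h
  exact h

lemma li_triple_iff (f : Fin 9 → Fin 3 → ℂ) {i j k : Fin 9}
    (hij : i ≠ j) (hik : i ≠ k) (hjk : j ≠ k) :
    LinearIndependent ℂ (fun x : ({i, j, k} : Set (Fin 9)) => f x) ↔
      LinearIndependent ℂ ![f i, f j, f k] := by
  have hinj : Function.Injective ![i, j, k] := by
    intro a b hab
    fin_cases a <;> fin_cases b <;> simp_all [Matrix.cons_val_zero, Matrix.cons_val_one,
      Matrix.head_cons]
  have hr : ({i, j, k} : Set (Fin 9)) = Set.range ![i, j, k] := by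
    ext x
    constructor
    · rintro (rfl | rfl | rfl)
      exacts [⟨0, rfl⟩, ⟨1, rfl⟩, ⟨2, rfl⟩]
    · rintro ⟨m, rfl⟩
      fin_cases m
      · exact Or.inl rfl
      · exact Or.inr (Or.inl rfl)
      · exact Or.inr (Or.inr rfl)
  rw [hr]
  exact linearIndependent_equiv' (R := ℂ) (M := Fin 3 → ℂ) (Equiv.ofInjective _ hinj)
    (f := fun x : Set.range ![i, j, k] => f x) (g := ![f i, f j, f k])
    (by funext m; fin_cases m <;> simp [Equiv.ofInjective]) |>.symm

lemma li_mono {S T : Set (Fin 9)} (hST : S ⊆ T) (f : Fin 9 → Fin 3 → ℂ)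
    (h : LinearIndependent ℂ (fun x : T => f x)) :
    LinearIndependent ℂ (fun x : S => f x) :=
  h.comp (Set.inclusion hST) (Set.inclusion_injective hST)

lemma not_li_of_four (f : Fin 9 → Fin 3 → ℂ) {S : Set (Fin 9)} (h4 : 4 ≤ S.ncard) :
    ¬ LinearIndependent ℂ (fun x : S => f x) := by
  intro h
  have hfin : Fintype S := S.toFinite.fintype
  have hle := h.fintype_card_le_finrank
  rw [Module.finrank_fintype_fun_eq_card, Fintype.card_fin] at hle
  have hc : S.ncard = Fintype.card S := by
    rw [← Nat.card_coe_set_eq, Nat.card_eq_fintype_card]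
  omega

/-- First affine coordinates of the nine points (index `0` is the label `9`). -/
def aq : Fin 9 → ℤ
  | 0 => 0
  | 1 => 0
  | 2 => 15
  | 3 => 30
  | 4 => 60
  | 5 => 120
  | 6 => 240
  | 7 => -20
  | 8 => -12

/-- Second affine coordinates of the nine points (index `0` is the label `9`). -/
def bq : Fin 9 → ℤ
  | 0 => -240
  | 1 => 0
  | 2 => 15
  | 3 => 60
  | 4 => 240
  | 5 => 960
  | 6 => 3840
  | 7 => -160
  | 8 => -192

/-- Affine collinearity determinant. -/
def adq (i j k : Fin 9) : ℤ :=
  (aq j * bq k - aq k * bq j) - (aq i * bq k - aq k * bq i) + (aq i * bq j - aq j * bq i)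

/-- Decidable proxy for `{i, j, k} ∈ pascalTriples`. -/
def trip (i j k : Fin 9) : Prop :=
  (∀ x : Fin 9, (x = i ∨ x = j ∨ x = k) ↔ (x = 1 ∨ x = 6 ∨ x = 8)) ∨
  (∀ x : Fin 9, (x = i ∨ x = j ∨ x = k) ↔ (x = 1 ∨ x = 5 ∨ x = 7)) ∨
  (∀ x : Fin 9, (x = i ∨ x = j ∨ x = k) ↔ (x = 2 ∨ x = 4 ∨ x = 7)) ∨
  (∀ x : Fin 9, (x = i ∨ x = j ∨ x = k) ↔ (x = 2 ∨ x = 6 ∨ x = 9)) ∨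
  (∀ x : Fin 9, (x = i ∨ x = j ∨ x = k) ↔ (x = 3 ∨ x = 4 ∨ x = 8)) ∨
  (∀ x : Fin 9, (x = i ∨ x = j ∨ x = k) ↔ (x = 3 ∨ x = 5 ∨ x = 9)) ∨
  (∀ x : Fin 9, (x = i ∨ x = j ∨ x = k) ↔ (x = 7 ∨ x = 8 ∨ x = 9))

instance (i j k : Fin 9) : Decidable (trip i j k) := by
  unfold trip; infer_instance

lemma trip_iff_mem (i j k : Fin 9) :
    ({i, j, k} : Set (Fin 9)) ∈ pascalTriples ↔ trip i j k := by
  simp only [pascalTriples, Set.mem_insert_iff, Set.mem_singleton_iff, Set.ext_iff, trip]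

lemma fact1 : ∀ i j k : Fin 9, i ≠ j → i ≠ k → j ≠ k → (trip i j k ↔ adq i j k = 0) := by
  decide

lemma fact2 : ∀ i j : Fin 9, ∃ k, k ≠ i ∧ k ≠ j ∧ ¬ trip i j k := by
  decide

lemma D3_expand (v u w : Fin 3 → ℂ) (t a1 b1 a2 b2 a3 b3 : ℂ) :
    D3 (fun m => v m + t * (a1 * u m + b1 * w m)) (fun m => v m + t * (a2 * u m + b2 * w m))
      (fun m => v m + t * (a3 * u m + b3 * w m)) =
      t ^ 2 * ((a2 * b3 - a3 * b2) - (a1 * b3 - a3 * b1) + (a1 * b2 - a2 * b1)) * D3 v u w := by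
  simp only [D3]; ring

lemma exists_uw (v : Fin 3 → ℂ) (hv : v ≠ 0) : ∃ u w : Fin 3 → ℂ, D3 v u w ≠ 0 := by
  have h : ∃ m, v m ≠ 0 := by
    by_contra h; push_neg at h; exact hv (funext h)
  obtain ⟨m, hm⟩ := h
  fin_cases m
  · exact ⟨![0, 1, 0], ![0, 0, 1], by simpa [D3] using hm⟩
  · exact ⟨![0, 0, 1], ![1, 0, 0], by simpa [D3] using hm⟩
  · exact ⟨![1, 0, 0], ![0, 1, 0], by simpa [D3] using hm⟩

/-- The family of configurations converging to the constant tuple. -/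
def gam (v u w : Fin 3 → ℂ) (t : ℂ) : Config 9 :=
  fun pr => v pr.2 + t * ((aq pr.1 : ℂ) * u pr.2 + (bq pr.1 : ℂ) * w pr.2)

lemma D3_gam (v u w : Fin 3 → ℂ) (t : ℂ) (i j k : Fin 9) :
    D3 (cvec (gam v u w t) i) (cvec (gam v u w t) j) (cvec (gam v u w t) k) =
      t ^ 2 * ((adq i j k : ℤ) : ℂ) * D3 v u w := by
  rw [show cvec (gam v u w t) i = fun m => v m + t * ((aq i : ℂ) * u m + (bq i : ℂ) * w m) from rfl,
    show cvec (gam v u w t) j = fun m => v m + t * ((aq j : ℂ) * u m + (bq j : ℂ) * w m) from rfl,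
    show cvec (gam v u w t) k = fun m => v m + t * ((aq k : ℂ) * u m + (bq k : ℂ) * w m) from rfl,
    D3_expand]
  push_cast [adq]
  ring

lemma gam_mem (v u w : Fin 3 → ℂ) (hD : D3 v u w ≠ 0) (t : ℂ) (ht : t ≠ 0) :
    gam v u w t ∈ realizationSpace pascal := by
  intro S _hS
  rw [LinDep]
  rw [not_iff_not]
  have key3 : ∀ i j k : Fin 9, i ≠ j → i ≠ k → j ≠ k →
      (LinearIndependent ℂ (fun x : ({i, j, k} : Set (Fin 9)) => cvec (gam v u w t) x) ↔
        adq i j k ≠ 0) := by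
    intro i j k hij hik hjk
    rw [li_triple_iff _ hij hik hjk, li_iff_D3, D3_gam, mul_ne_zero_iff, mul_ne_zero_iff]
    constructor
    · rintro ⟨⟨-, h⟩, -⟩
      exact_mod_cast h
    · intro h
      exact ⟨⟨pow_ne_zero 2 ht, by exact_mod_cast h⟩, hD⟩
  show (S.ncard ≤ 2 ∨ (S.ncard = 3 ∧ S ∉ pascalTriples)) ↔ _
  rcases Nat.lt_or_ge S.ncard 4 with h4 | h4
  · have h3 : S.ncard = 0 ∨ S.ncard = 1 ∨ S.ncard = 2 ∨ S.ncard = 3 := by omega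
    rcases h3 with h | h | h | h
    · obtain rfl : S = ∅ := (Set.ncard_eq_zero S.toFinite).mp h
      refine iff_of_true (Or.inl (by simp)) ?_
      haveI : IsEmpty ((∅ : Set (Fin 9))) := Set.isEmpty_coe_sort.mpr rfl
      exact linearIndependent_empty_type
    · obtain ⟨i, rfl⟩ := Set.ncard_eq_one.mp h
      obtain ⟨j, hji, -, -⟩ := fact2 i i
      obtain ⟨k, hki, hkj, htr⟩ := fact2 i j
      refine iff_of_true (Or.inl (by simp)) ?_
      refine li_mono (T := {i, j, k}) (by intro x hx; simp_all) _ ?_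
      exact (key3 i j k (Ne.symm hji) (Ne.symm hki) (Ne.symm hkj)).mpr
        (fun h0 => htr ((fact1 i j k (Ne.symm hji) (Ne.symm hki) (Ne.symm hkj)).mpr h0))
    · obtain ⟨i, j, hij, rfl⟩ := Set.ncard_eq_two.mp h
      obtain ⟨k, hki, hkj, htr⟩ := fact2 i j
      refine iff_of_true (Or.inl (by rw [h])) ?_
      refine li_mono (T := {i, j, k}) (by intro x hx; simp_all; tauto) _ ?_
      exact (key3 i j k hij (Ne.symm hki) (Ne.symm hkj)).mpr
        (fun h0 => htr ((fact1 i j k hij (Ne.symm hki) (Ne.symm hkj)).mpr h0))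
    · have hcopy := h
      obtain ⟨i, j, k, hij, hik, hjk, rfl⟩ := Set.ncard_eq_three.mp h
      rw [key3 i j k hij hik hjk]
      have hmem : (({i, j, k} : Set (Fin 9)) ∈ pascalTriples) ↔ adq i j k = 0 :=
        (trip_iff_mem i j k).trans (fact1 i j k hij hik hjk)
      constructor
      · rintro (h2 | ⟨-, hnot⟩)
        · omega
        · exact fun h0 => hnot (hmem.mpr h0)
      · intro had
        exact Or.inr ⟨hcopy, fun hm => had (hmem.mp hm)⟩
  · refine iff_of_false ?_ (not_li_of_four _ h4)
    rintro (h2 | ⟨h3, -⟩) <;> omega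

lemma eval_aeval (F : Fin 9 × Fin 3 → Polynomial ℂ) (t : ℂ)
    (p : MvPolynomial (Fin 9 × Fin 3) ℂ) :
    Polynomial.eval t (MvPolynomial.aeval F p) =
      MvPolynomial.eval (fun i => Polynomial.eval t (F i)) p := by
  induction p using MvPolynomial.induction_on with
  | C a => simp
  | add p q hp hq => simp [hp, hq]
  | mul_X q i hq => simp [hq]

end PascalAux

/-- For every nonzero vector `v ∈ ℂ³`, the constant tuple
`(v, v, v, v, v, v, v, v, v)` lies in the matroid variety of the Pascal configuration. -/
theorem pascal_constant_tuple_mem (v : Fin 3 → ℂ) (hv : v ≠ 0) :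
    (fun pr : Fin 9 × Fin 3 => v pr.2) ∈ matroidVariety pascal := by
  classical
  open PascalAux in
  obtain ⟨u, w, hD⟩ := exists_uw v hv
  rw [matroidVariety, MvPolynomial.mem_zeroLocus_iff]
  intro p hp
  rw [MvPolynomial.mem_vanishingIdeal_iff] at hp
  set F : Fin 9 × Fin 3 → Polynomial ℂ := fun pr =>
    Polynomial.C (v pr.2) +
      Polynomial.X * Polynomial.C ((PascalAux.aq pr.1 : ℂ) * u pr.2 +
        (PascalAux.bq pr.1 : ℂ) * w pr.2) with hF
  have heval : ∀ t : ℂ, Polynomial.eval t (MvPolynomial.aeval F p) =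
      MvPolynomial.eval (PascalAux.gam v u w t) p := by
    intro t
    rw [PascalAux.eval_aeval]
    have hfun : (fun i => Polynomial.eval t (F i)) = PascalAux.gam v u w t := by
      funext pr
      simp [hF, PascalAux.gam]
    rw [hfun]
  have hroot : ∀ t : ℂ, t ≠ 0 → Polynomial.eval t (MvPolynomial.aeval F p) = 0 := by
    intro t ht
    rw [heval t]
    exact hp _ (PascalAux.gam_mem v u w hD t ht)
  have hq0 : MvPolynomial.aeval F p = 0 := by
    apply Polynomial.eq_zero_of_infinite_isRoot
    apply Set.Infinite.mono (s := ({0}ᶜ : Set ℂ))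
    · intro t ht
      exact hroot t (by simpa using ht)
    · exact (Set.finite_singleton (0 : ℂ)).infinite_compl
  have h0 := heval 0
  rw [hq0] at h0
  simp only [Polynomial.eval_zero] at h0
  have hg : PascalAux.gam v u w 0 = (fun pr : Fin 9 × Fin 3 => v pr.2) := by
    funext pr
    simp [PascalAux.gam]
  rw [hg] at h0
  exact h0.symm
end
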